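/- arXiv:0903.1224 — 6 statements merged into one kernel-verified Lean document; each statement's English description precedes it below -/
import Mathlib

section
/- Let I = [a,b] ∩ 𝕋 be a closed bounded interval of a time scale 𝕋 and let g : I → ℝ be continuous and strictly increasing on I. For every δ > 0 there exists a partition a = t₀ < t₁ < ⋯ < tₙ = b of points of 𝕋 such that for each j, either g(tⱼ) − g(t_{j−1}) ≤ δ, or g(tⱼ) − g(t_{j−1}) > δ and ρ(tⱼ) = t_{j−1} (i.e., tⱼ is the immediate successor of t_{j−1} in 𝕋). -/
open Set Filter

noncomputable section

/-- Backward jump operator of a time scale `T`. -/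
def tsRho (T : Set ℝ) (t : ℝ) : ℝ := sSup {s ∈ T | s < t}

/-- Forward jump operator of a time scale `T`. -/
def tsSigma (T : Set ℝ) (t : ℝ) : ℝ := sInf {s ∈ T | t < s}

/-- A partition `a = t₀ < t₁ < ⋯ < tₙ = b` of `[a,b] ∩ T` by points of `T`. -/
structure TSPartition (T : Set ℝ) (a b : ℝ) where
  n : ℕ
  t : ℕ → ℝ
  npos : 0 < n
  mem : ∀ j ≤ n, t j ∈ T
  first : t 0 = a
  last : t n = b
  mono : ∀ j < n, t j < t (j + 1)

/-- Upper Darboux–Stieltjes delta sum `U_Δ(P, f, g)`. -/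
def upperSumD (T : Set ℝ) (f g : ℝ → ℝ) {a b : ℝ} (P : TSPartition T a b) : ℝ :=
  ∑ j ∈ Finset.range P.n,
    sSup (f '' (Set.Icc (P.t j) (tsRho T (P.t (j + 1))) ∩ T)) * (g (P.t (j + 1)) - g (P.t j))

/-- Lower Darboux–Stieltjes delta sum `L_Δ(P, f, g)`. -/
def lowerSumD (T : Set ℝ) (f g : ℝ → ℝ) {a b : ℝ} (P : TSPartition T a b) : ℝ :=
  ∑ j ∈ Finset.range P.n,
    sInf (f '' (Set.Icc (P.t j) (tsRho T (P.t (j + 1))) ∩ T)) * (g (P.t (j + 1)) - g (P.t j))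

/-- Upper Darboux–Stieltjes nabla sum `U_∇(P, f, g)`. -/
def upperSumN (T : Set ℝ) (f g : ℝ → ℝ) {a b : ℝ} (P : TSPartition T a b) : ℝ :=
  ∑ j ∈ Finset.range P.n,
    sSup (f '' (Set.Icc (tsSigma T (P.t j)) (P.t (j + 1)) ∩ T)) * (g (P.t (j + 1)) - g (P.t j))

/-- Lower Darboux–Stieltjes nabla sum `L_∇(P, f, g)`. -/
def lowerSumN (T : Set ℝ) (f g : ℝ → ℝ) {a b : ℝ} (P : TSPartition T a b) : ℝ :=
  ∑ j ∈ Finset.range P.n,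
    sInf (f '' (Set.Icc (tsSigma T (P.t j)) (P.t (j + 1)) ∩ T)) * (g (P.t (j + 1)) - g (P.t j))

/-- Upper Darboux–Stieltjes delta integral. -/
def upperIntD (T : Set ℝ) (a b : ℝ) (f g : ℝ → ℝ) : ℝ :=
  sInf (Set.range fun P : TSPartition T a b => upperSumD T f g P)

/-- Lower Darboux–Stieltjes delta integral. -/
def lowerIntD (T : Set ℝ) (a b : ℝ) (f g : ℝ → ℝ) : ℝ :=
  sSup (Set.range fun P : TSPartition T a b => lowerSumD T f g P)

/-- Upper Darboux–Stieltjes nabla integral. -/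
def upperIntN (T : Set ℝ) (a b : ℝ) (f g : ℝ → ℝ) : ℝ :=
  sInf (Set.range fun P : TSPartition T a b => upperSumN T f g P)

/-- Lower Darboux–Stieltjes nabla integral. -/
def lowerIntN (T : Set ℝ) (a b : ℝ) (f g : ℝ → ℝ) : ℝ :=
  sSup (Set.range fun P : TSPartition T a b => lowerSumN T f g P)

/-- `f` is Riemann–Stieltjes delta integrable with respect to `g` on `[a,b] ∩ T`. -/
def RSDeltaIntegrable (T : Set ℝ) (a b : ℝ) (f g : ℝ → ℝ) : Prop :=
  lowerIntD T a b f g = upperIntD T a b f g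

/-- The Riemann–Stieltjes delta integral `∫ₐᵇ f Δg`. -/
def RSDeltaIntegral (T : Set ℝ) (a b : ℝ) (f g : ℝ → ℝ) : ℝ := upperIntD T a b f g

/-- `f` is Riemann–Stieltjes nabla integrable with respect to `g` on `[a,b] ∩ T`. -/
def RSNablaIntegrable (T : Set ℝ) (a b : ℝ) (f g : ℝ → ℝ) : Prop :=
  lowerIntN T a b f g = upperIntN T a b f g

/-- The Riemann–Stieltjes nabla integral `∫ₐᵇ f ∇g`. -/
def RSNablaIntegral (T : Set ℝ) (a b : ℝ) (f g : ℝ → ℝ) : ℝ := upperIntN T a b f g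
/-- Auxiliary predicate: the pair `(x, y)` is a good step of the partition. -/
def TSGood (T : Set ℝ) (g : ℝ → ℝ) (δ x y : ℝ) : Prop :=
  g y - g x ≤ δ ∨ (g y - g x > δ ∧ tsRho T y = x)

lemma ts_exists_single {T : Set ℝ} {g : ℝ → ℝ} {δ t b : ℝ} (ht : t ∈ T) (hb : b ∈ T)
    (hlt : t < b) (hg : TSGood T g δ t b) :
    ∃ P : TSPartition T t b, ∀ j < P.n, TSGood T g δ (P.t j) (P.t (j + 1)) := by
  refine ⟨⟨1, fun j => if j = 0 then t else b, one_pos, ?_, by simp, by simp, ?_⟩, ?_⟩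
  · intro j _; split <;> assumption
  · intro j hj; interval_cases j; simpa using hlt
  · intro j hj; interval_cases j; simpa using hg

lemma ts_exists_cons {T : Set ℝ} {g : ℝ → ℝ} {δ u b : ℝ} (P : TSPartition T u b)
    (hP : ∀ j < P.n, TSGood T g δ (P.t j) (P.t (j + 1)))
    {t : ℝ} (ht : t ∈ T) (hlt : t < u) (hg : TSGood T g δ t u) :
    ∃ Q : TSPartition T t b, ∀ j < Q.n, TSGood T g δ (Q.t j) (Q.t (j + 1)) := by
  refine ⟨⟨P.n + 1, fun j => if j = 0 then t else P.t (j - 1), Nat.succ_pos _, ?_, by simp,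
      ?_, ?_⟩, ?_⟩
  · intro j _; split
    · exact ht
    · exact P.mem _ (by omega)
  · rw [if_neg (by omega)]; simpa using P.last
  · intro j hj
    rcases Nat.eq_zero_or_pos j with h0 | h0
    · subst h0
      simpa [P.first] using hlt
    · rw [if_neg (by omega), if_neg (by omega)]
      have h := P.mono (j - 1) (by omega)
      rw [Nat.sub_add_cancel h0] at h
      simpa [Nat.add_sub_cancel] using h
  · intro j hj
    have hj' : j < P.n + 1 := hj
    rcases Nat.eq_zero_or_pos j with h0 | h0
    · subst h0
      simpa [P.first] using hg
    · dsimp only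
      rw [if_neg (by omega), if_neg (by omega), Nat.add_sub_cancel]
      have h := hP (j - 1) (by omega : j - 1 < P.n)
      rwa [Nat.sub_add_cancel h0] at h

lemma ts_key {T : Set ℝ} (hT : IsClosed T) {a₀ b : ℝ} (hb : b ∈ T) {g : ℝ → ℝ} {δ : ℝ}
    (hδ : 0 < δ) (hgc : ContinuousOn g (Set.Icc a₀ b ∩ T))
    (hgm : StrictMonoOn g (Set.Icc a₀ b ∩ T)) :
    ∀ n : ℕ, ∀ t, t ∈ Set.Icc a₀ b ∩ T → t < b → g b - g t ≤ n * δ →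
      ∃ P : TSPartition T t b, ∀ j < P.n, TSGood T g δ (P.t j) (P.t (j + 1)) := by
  intro n
  induction n with
  | zero =>
    intro t htI htb hbound
    exfalso
    have hbI : b ∈ Set.Icc a₀ b ∩ T := ⟨⟨le_trans htI.1.1 htb.le, le_refl b⟩, hb⟩
    have := hgm htI hbI htb
    simp only [Nat.cast_zero, zero_mul] at hbound
    linarith
  | succ n ih =>
    intro t htI htb hbound
    set I := Set.Icc a₀ b ∩ T with hIdef
    have hIclosed : IsClosed I := isClosed_Icc.inter hT
    set S := (I ∩ g ⁻¹' Set.Iic (g t + δ)) ∩ Set.Ici t with hSdef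
    have hSclosed : IsClosed S :=
      (hgc.preimage_isClosed_of_isClosed hIclosed isClosed_Iic).inter isClosed_Ici
    have htS : t ∈ S := ⟨⟨htI, by simp only [Set.mem_preimage, Set.mem_Iic]; linarith⟩,
      le_refl t⟩
    have hSbdd : BddAbove S := ⟨b, fun s hs => hs.1.1.1.2⟩
    set u := sSup S with hudef
    have huS : u ∈ S := hSclosed.csSup_mem ⟨t, htS⟩ hSbdd
    have huI : u ∈ I := huS.1.1
    have htu : t ≤ u := huS.2
    have hgu : g u ≤ g t + δ := huS.1.2
    have star : ∀ s ∈ I, u < s → g t + δ < g s := by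
      intro s hsI hus
      by_contra h
      push_neg at h
      have hsS : s ∈ S := ⟨⟨hsI, h⟩, le_trans htu hus.le⟩
      exact absurd (le_csSup hSbdd hsS) (not_le.2 hus)
    rcases eq_or_lt_of_le huI.1.2 with hub | hub
    · -- u = b : one step of size ≤ δ
      refine ts_exists_single htI.2 hb htb (Or.inl ?_)
      rw [← hub]; linarith
    · -- u < b
      set A := {s | s ∈ T ∧ u < s} with hAdef
      have hbA : b ∈ A := ⟨hb, hub⟩
      have hAbdd : BddBelow A := ⟨u, fun s hs => hs.2.le⟩
      set m := sInf A with hmdef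
      have hmT : m ∈ T := by
        have h1 : m ∈ closure A := csInf_mem_closure ⟨b, hbA⟩ hAbdd
        have h2 : closure A ⊆ T := by
          rw [← hT.closure_eq]
          exact closure_mono fun s hs => hs.1
        exact h2 h1
      have hum : u ≤ m := le_csInf ⟨b, hbA⟩ fun s hs => hs.2.le
      have hmb : m ≤ b := csInf_le hAbdd hbA
      by_cases hdense : m = u
      · -- right dense at u : g u ≥ g t + δ
        set B := I ∩ Set.Ioi u with hBdef
        have hclB : u ∈ closure B := by
          rw [Metric.mem_closure_iff]
          intro ε hε
          have hε' : 0 < min ε (b - u) := lt_min hε (by linarith)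
          have hlt : sInf A < u + min ε (b - u) := by
            rw [← hdense] at hε' ⊢
            linarith
          obtain ⟨s, hsA, hs⟩ := exists_lt_of_csInf_lt ⟨b, hbA⟩ hlt
          refine ⟨s, ⟨⟨⟨?_, ?_⟩, hsA.1⟩, hsA.2⟩, ?_⟩
          · exact le_trans (le_trans htI.1.1 htu) hsA.2.le
          · have : s < u + (b - u) := lt_of_lt_of_le hs (by
              exact add_le_add (le_refl u) (min_le_right _ _))
            linarith
          · have h1 : s - u < min ε (b - u) := by linarith [hsA.2]
            rw [Real.dist_eq, abs_sub_comm, abs_of_pos (by linarith [hsA.2] : (0:ℝ) < s - u)]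
            exact lt_of_lt_of_le h1 (min_le_left _ _)
        have hnb : (nhdsWithin u B).NeBot := mem_closure_iff_nhdsWithin_neBot.mp hclB
        have htend : Tendsto g (nhdsWithin u B) (nhds (g u)) :=
          (hgc u huI).mono Set.inter_subset_left
        have hge : g t + δ ≤ g u := by
          refine ge_of_tendsto htend ?_
          filter_upwards [eventually_mem_nhdsWithin] with s hs
          exact (star s hs.1 hs.2).le
        have htu' : t < u := by
          rcases eq_or_lt_of_le htu with heq | h
          · exfalso; rw [← heq] at hge; linarith
          · exact h
        have hbound' : g b - g u ≤ n * δ := by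
          push_cast at hbound; linarith
        obtain ⟨P, hP⟩ := ih u huI hub hbound'
        exact ts_exists_cons P hP htI.2 htu' (Or.inl (by linarith))
      · -- right scattered at u
        have hum' : u < m := lt_of_le_of_ne hum (Ne.symm hdense)
        have hmI : m ∈ I := ⟨⟨le_trans (le_trans htI.1.1 htu) hum'.le, hmb⟩, hmT⟩
        have hgmδ : g t + δ < g m := star m hmI hum'
        have hrho : tsRho T m = u := by
          unfold tsRho
          apply le_antisymm
          · refine csSup_le ⟨u, huI.2, hum'⟩ ?_
            rintro s ⟨hsT, hsm⟩
            by_contra h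
            push_neg at h
            exact absurd (csInf_le hAbdd ⟨hsT, h⟩) (not_le.2 hsm)
          · exact le_csSup ⟨m, fun s hs => hs.2.le⟩ ⟨huI.2, hum'⟩
        have goodum : TSGood T g δ u m := by
          by_cases h : g m - g u ≤ δ
          · exact Or.inl h
          · exact Or.inr ⟨not_le.mp h, hrho⟩
        have hQ : ∃ Q : TSPartition T u b, ∀ j < Q.n, TSGood T g δ (Q.t j) (Q.t (j + 1)) := by
          rcases eq_or_lt_of_le hmb with hmeq | hmlt
          · exact ts_exists_single huI.2 hb hub (hmeq ▸ goodum)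
          · have hbound'' : g b - g m ≤ n * δ := by
              push_cast at hbound; linarith
            obtain ⟨P, hP⟩ := ih m hmI hmlt hbound''
            exact ts_exists_cons P hP huI.2 hum' goodum
        obtain ⟨Q, hQ'⟩ := hQ
        rcases eq_or_lt_of_le htu with heq | htu'
        · rw [heq]; exact ⟨Q, hQ'⟩
        · exact ts_exists_cons Q hQ' htI.2 htu' (Or.inl (by linarith))

/-- Lemma 2: refinement partition for continuous strictly increasing `g`. -/
theorem statement0 (T : Set ℝ) (hT : IsClosed T) (a b : ℝ) (ha : a ∈ T) (hb : b ∈ T)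
    (hab : a < b) (g : ℝ → ℝ)
    (hgc : ContinuousOn g (Set.Icc a b ∩ T))
    (hgm : StrictMonoOn g (Set.Icc a b ∩ T)) :
    ∀ δ > (0 : ℝ), ∃ P : TSPartition T a b, ∀ j < P.n,
      g (P.t (j + 1)) - g (P.t j) ≤ δ ∨
        (g (P.t (j + 1)) - g (P.t j) > δ ∧ tsRho T (P.t (j + 1)) = P.t j) := by
  intro δ hδ
  have hn : g b - g a ≤ (⌈(g b - g a) / δ⌉₊ : ℝ) * δ := by
    rw [← div_le_iff₀ hδ]
    exact Nat.le_ceil _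
  obtain ⟨P, hP⟩ := ts_key hT hb hδ hgc hgm ⌈(g b - g a) / δ⌉₊ a ⟨⟨le_refl a, hab.le⟩, ha⟩
    hab hn
  exact ⟨P, fun j hj => hP j hj⟩
end
end

section
/- (Integrability criterion) Let f be bounded on I = [a,b] ∩ 𝕋 and g increasing on I. Then f is Riemann–Stieltjes delta integrable with respect to g on I if and only if for every ε > 0 there exists a partition P of I such that U_Δ(P,f,g) − L_Δ(P,f,g) < ε. -/
open Set Filter

noncomputable section

section Aux

variable {T : Set ℝ} {a b : ℝ}

theorem TSPartition.t_lt (P : TSPartition T a b) {j k : ℕ} (hjk : j < k) (hk : k ≤ P.n) :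
    P.t j < P.t k := by
  induction k with
  | zero => omega
  | succ m ih =>
    have hmono := P.mono m (by omega)
    rcases Nat.lt_or_ge j m with h | h
    · exact lt_trans (ih h (by omega)) hmono
    · have : j = m := by omega
      subst this; exact hmono

theorem TSPartition.t_le (P : TSPartition T a b) {j k : ℕ} (hjk : j ≤ k) (hk : k ≤ P.n) :
    P.t j ≤ P.t k := by
  rcases eq_or_lt_of_le hjk with rfl | h
  · exact le_rfl
  · exact (P.t_lt h hk).le

theorem TSPartition.t_mem_Icc (P : TSPartition T a b) {j : ℕ} (hj : j ≤ P.n) :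
    P.t j ∈ Set.Icc a b := by
  constructor
  · calc a = P.t 0 := P.first.symm
      _ ≤ P.t j := P.t_le (Nat.zero_le j) hj
  · calc P.t j ≤ P.t P.n := P.t_le hj le_rfl
      _ = b := P.last

theorem le_tsRho {u v : ℝ} (hu : u ∈ T) (huv : u < v) : u ≤ tsRho T v :=
  le_csSup ⟨v, fun _ hx => hx.2.le⟩ ⟨hu, huv⟩

theorem tsRho_le {u v : ℝ} (hu : u ∈ T) (huv : u < v) : tsRho T v ≤ v :=
  csSup_le ⟨u, hu, huv⟩ fun _ hx => hx.2.le

theorem TSPartition.blk_mem (P : TSPartition T a b) {j : ℕ} (hj : j < P.n) :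
    P.t j ∈ Set.Icc (P.t j) (tsRho T (P.t (j + 1))) ∩ T :=
  ⟨⟨le_rfl, le_tsRho (P.mem j hj.le) (P.mono j hj)⟩, P.mem j hj.le⟩

theorem TSPartition.blk_subset (P : TSPartition T a b) {j : ℕ} (hj : j < P.n) :
    Set.Icc (P.t j) (tsRho T (P.t (j + 1))) ∩ T ⊆ Set.Icc a b ∩ T := by
  rintro x ⟨⟨h1, h2⟩, hx⟩
  refine ⟨⟨le_trans (P.t_mem_Icc hj.le).1 h1, ?_⟩, hx⟩
  calc x ≤ tsRho T (P.t (j + 1)) := h2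
    _ ≤ P.t (j + 1) := tsRho_le (P.mem j hj.le) (P.mono j hj)
    _ ≤ b := (P.t_mem_Icc hj).2

variable {f g : ℝ → ℝ} {C : ℝ}

theorem bddAbove_img (hf : ∀ t ∈ Set.Icc a b ∩ T, |f t| ≤ C) {S : Set ℝ}
    (hS : S ⊆ Set.Icc a b ∩ T) : BddAbove (f '' S) := by
  refine ⟨C, ?_⟩; rintro y ⟨x, hx, rfl⟩
  exact le_trans (le_abs_self _) (hf x (hS hx))

theorem bddBelow_img (hf : ∀ t ∈ Set.Icc a b ∩ T, |f t| ≤ C) {S : Set ℝ}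
    (hS : S ⊆ Set.Icc a b ∩ T) : BddBelow (f '' S) := by
  refine ⟨-C, ?_⟩; rintro y ⟨x, hx, rfl⟩
  have := hf x (hS hx)
  have := neg_abs_le (f x)
  linarith

theorem sSup_mono_img (hf : ∀ t ∈ Set.Icc a b ∩ T, |f t| ≤ C) {S1 S2 : Set ℝ}
    (h12 : S1 ⊆ S2) (hS2 : S2 ⊆ Set.Icc a b ∩ T) (h1 : S1.Nonempty) :
    sSup (f '' S1) ≤ sSup (f '' S2) :=
  csSup_le_csSup (bddAbove_img hf hS2) (h1.image f) (Set.image_mono h12)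

theorem lower_le_upper (hf : ∀ t ∈ Set.Icc a b ∩ T, |f t| ≤ C)
    (hg : MonotoneOn g (Set.Icc a b ∩ T)) (P : TSPartition T a b) :
    lowerSumD T f g P ≤ upperSumD T f g P := by
  apply Finset.sum_le_sum
  intro j hj
  rw [Finset.mem_range] at hj
  have hne : (Set.Icc (P.t j) (tsRho T (P.t (j + 1))) ∩ T).Nonempty := ⟨_, P.blk_mem hj⟩
  have hsub := P.blk_subset hj
  have h1 := csInf_le_csSup (hne.image f) (bddBelow_img hf hsub) (bddAbove_img hf hsub)
  have hΔ : 0 ≤ g (P.t (j + 1)) - g (P.t j) := by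
    have := hg ⟨P.t_mem_Icc hj.le, P.mem j hj.le⟩ ⟨P.t_mem_Icc hj, P.mem (j + 1) hj⟩
      (P.t_le (Nat.le_succ j) hj)
    linarith
  exact mul_le_mul_of_nonneg_right h1 hΔ

theorem lowerSumD_eq_neg (P : TSPartition T a b) :
    lowerSumD T f g P = - upperSumD T (fun x => -f x) g P := by
  unfold lowerSumD upperSumD
  rw [← Finset.sum_neg_distrib]
  refine Finset.sum_congr rfl fun j _ => ?_
  rw [← neg_mul]
  congr 1
  have himg : (fun x => -f x) '' (Set.Icc (P.t j) (tsRho T (P.t (j + 1))) ∩ T)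
      = -(f '' (Set.Icc (P.t j) (tsRho T (P.t (j + 1))) ∩ T)) := by
    ext y
    simp only [Set.mem_neg, Set.mem_image]
    constructor
    · rintro ⟨x, hx, h⟩; exact ⟨x, hx, by linarith⟩
    · rintro ⟨x, hx, h⟩; exact ⟨x, hx, by linarith⟩
  rw [himg, Real.sInf_def]

/-- The point function obtained by inserting `s` after index `k`. -/
def insFun (t : ℕ → ℝ) (k : ℕ) (s : ℝ) : ℕ → ℝ :=
  fun j => if j ≤ k then t j else if j = k + 1 then s else t (j - 1)

theorem insFun_of_le {t : ℕ → ℝ} {k : ℕ} {s : ℝ} {j : ℕ} (h : j ≤ k) :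
    insFun t k s j = t j := if_pos h

theorem insFun_succ {t : ℕ → ℝ} {k : ℕ} {s : ℝ} :
    insFun t k s (k + 1) = s := by
  unfold insFun
  rw [if_neg (by omega), if_pos rfl]

theorem insFun_of_gt {t : ℕ → ℝ} {k : ℕ} {s : ℝ} {j : ℕ} (h : k + 1 < j) :
    insFun t k s j = t (j - 1) := by
  unfold insFun
  rw [if_neg (by omega), if_neg (by omega)]

def TSPartition.insertPt (P : TSPartition T a b) (k : ℕ) (s : ℝ) (hsT : s ∈ T)
    (hk : k < P.n) (h1 : P.t k < s) (h2 : s < P.t (k + 1)) : TSPartition T a b where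
  n := P.n + 1
  t := insFun P.t k s
  npos := Nat.succ_pos _
  mem := by
    intro j hj
    rcases Nat.lt_or_ge k j with h | h
    · rcases Nat.lt_or_ge (k + 1) j with h' | h'
      · rw [insFun_of_gt h']; exact P.mem (j - 1) (by omega)
      · have : j = k + 1 := by omega
        subst this; rw [insFun_succ]; exact hsT
    · rw [insFun_of_le h]; exact P.mem j (by omega)
  first := by rw [insFun_of_le (Nat.zero_le k)]; exact P.first
  last := by rw [insFun_of_gt (by omega)]; simpa using P.last
  mono := by
    intro j hj
    rcases Nat.lt_or_ge j k with h | h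
    · rw [insFun_of_le h.le, insFun_of_le h]; exact P.mono j (by omega)
    · rcases Nat.lt_or_ge k j with h' | h'
      · rcases Nat.lt_or_ge (k + 1) j with h'' | h''
        · rw [insFun_of_gt h'', insFun_of_gt (by omega)]
          have := P.mono (j - 1) (by omega)
          have e : j - 1 + 1 = j := by omega
          rw [e] at this
          simpa using this
        · have : j = k + 1 := by omega
          subst this
          rw [insFun_succ, insFun_of_gt (by omega)]
          simpa using h2
      · have : j = k := by omega
        subst this
        rw [insFun_of_le le_rfl, insFun_succ]
        exact h1

theorem TSPartition.upperSumD_insertPt_le (hf : ∀ t ∈ Set.Icc a b ∩ T, |f t| ≤ C)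
    (hg : MonotoneOn g (Set.Icc a b ∩ T)) (P : TSPartition T a b)
    {k : ℕ} {s : ℝ} (hsT : s ∈ T) (hk : k < P.n) (h1 : P.t k < s) (h2 : s < P.t (k + 1)) :
    upperSumD T f g (P.insertPt k s hsT hk h1 h2) ≤ upperSumD T f g P := by
  set F : ℕ → ℝ := fun j =>
    sSup (f '' (Set.Icc (P.t j) (tsRho T (P.t (j + 1))) ∩ T)) * (g (P.t (j + 1)) - g (P.t j))
    with hF
  set t' : ℕ → ℝ := insFun P.t k s with ht'
  set F' : ℕ → ℝ := fun j =>
    sSup (f '' (Set.Icc (t' j) (tsRho T (t' (j + 1))) ∩ T)) * (g (t' (j + 1)) - g (t' j))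
    with hF'
  have hUP : upperSumD T f g P = ∑ j ∈ Finset.range P.n, F j := rfl
  have hUP' : upperSumD T f g (P.insertPt k s hsT hk h1 h2)
      = ∑ j ∈ Finset.range (P.n + 1), F' j := rfl
  rw [hUP, hUP']
  -- decompose both sums
  rw [← Finset.sum_range_add_sum_Ico F' (show k + 2 ≤ P.n + 1 by omega),
    ← Finset.sum_range_add_sum_Ico F (show k + 1 ≤ P.n by omega),
    Finset.sum_range_succ, Finset.sum_range_succ, Finset.sum_range_succ]
  have hhead : ∑ j ∈ Finset.range k, F' j = ∑ j ∈ Finset.range k, F j := by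
    refine Finset.sum_congr rfl fun j hj => ?_
    rw [Finset.mem_range] at hj
    rw [hF', hF]
    simp only
    rw [ht', insFun_of_le hj.le, insFun_of_le (by omega : j + 1 ≤ k)]
  have htail : ∑ j ∈ Finset.Ico (k + 2) (P.n + 1), F' j
      = ∑ j ∈ Finset.Ico (k + 1) P.n, F j := by
    rw [Finset.sum_Ico_eq_sum_range, Finset.sum_Ico_eq_sum_range]
    have e : P.n + 1 - (k + 2) = P.n - (k + 1) := by omega
    rw [e]
    refine Finset.sum_congr rfl fun i hi => ?_
    rw [hF', hF]
    simp only
    rw [ht', insFun_of_gt (by omega : k + 1 < k + 2 + i),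
      insFun_of_gt (by omega : k + 1 < k + 2 + i + 1)]
    have e1 : k + 2 + i - 1 = k + 1 + i := by omega
    have e2 : k + 2 + i + 1 - 1 = k + 1 + i + 1 := by omega
    have e3 : k + 1 + i + 1 = k + 2 + i := by omega
    rw [e1, e2, e3]
  rw [hhead, htail]
  have hmid : F' k + F' (k + 1) ≤ F k := by
    have ek0 : t' k = P.t k := insFun_of_le le_rfl
    have ek1 : t' (k + 1) = s := insFun_succ
    have ek2 : t' (k + 2) = P.t (k + 1) := by
      rw [ht', insFun_of_gt (by omega)]
      norm_num
    have hFk' : F' k = sSup (f '' (Set.Icc (P.t k) (tsRho T s) ∩ T)) * (g s - g (P.t k)) := by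
      rw [hF']; simp only; rw [ek0, ek1]
    have hFk1' : F' (k + 1)
        = sSup (f '' (Set.Icc s (tsRho T (P.t (k + 1))) ∩ T)) * (g (P.t (k + 1)) - g s) := by
      rw [hF']; simp only
      have : k + 1 + 1 = k + 2 := rfl
      rw [this, ek1, ek2]
    -- memberships in Icc a b ∩ T
    have htk : P.t k ∈ Set.Icc a b ∩ T := ⟨P.t_mem_Icc hk.le, P.mem k hk.le⟩
    have htk1 : P.t (k + 1) ∈ Set.Icc a b ∩ T := ⟨P.t_mem_Icc hk, P.mem (k + 1) hk⟩
    have hsab : s ∈ Set.Icc a b ∩ T :=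
      ⟨⟨le_trans htk.1.1 h1.le, le_trans h2.le htk1.1.2⟩, hsT⟩
    -- rho facts
    have hr1 : P.t k ≤ tsRho T s := le_tsRho htk.2 h1
    have hr2 : tsRho T s ≤ s := tsRho_le htk.2 h1
    have hr3 : s ≤ tsRho T (P.t (k + 1)) := le_tsRho hsT h2
    -- set inclusions
    have hbig := P.blk_subset hk
    have hS1 : Set.Icc (P.t k) (tsRho T s) ∩ T
        ⊆ Set.Icc (P.t k) (tsRho T (P.t (k + 1))) ∩ T := by
      rintro x ⟨⟨hx1, hx2⟩, hxT⟩
      exact ⟨⟨hx1, le_trans hx2 (le_trans hr2 hr3)⟩, hxT⟩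
    have hS2 : Set.Icc s (tsRho T (P.t (k + 1))) ∩ T
        ⊆ Set.Icc (P.t k) (tsRho T (P.t (k + 1))) ∩ T := by
      rintro x ⟨⟨hx1, hx2⟩, hxT⟩
      exact ⟨⟨le_trans h1.le hx1, hx2⟩, hxT⟩
    have hne1 : (Set.Icc (P.t k) (tsRho T s) ∩ T).Nonempty := ⟨P.t k, ⟨⟨le_rfl, hr1⟩, htk.2⟩⟩
    have hne2 : (Set.Icc s (tsRho T (P.t (k + 1))) ∩ T).Nonempty := ⟨s, ⟨⟨le_rfl, hr3⟩, hsT⟩⟩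
    have hM1 := sSup_mono_img hf hS1 hbig hne1
    have hM2 := sSup_mono_img hf hS2 hbig hne2
    have hd1 : 0 ≤ g s - g (P.t k) := by
      have := hg htk hsab h1.le; linarith
    have hd2 : 0 ≤ g (P.t (k + 1)) - g s := by
      have := hg hsab htk1 h2.le; linarith
    rw [hFk', hFk1', hF]
    simp only
    nlinarith [mul_le_mul_of_nonneg_right hM1 hd1, mul_le_mul_of_nonneg_right hM2 hd2]
  linarith

theorem TSPartition.lowerSumD_insertPt_le (hf : ∀ t ∈ Set.Icc a b ∩ T, |f t| ≤ C)
    (hg : MonotoneOn g (Set.Icc a b ∩ T)) (P : TSPartition T a b)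
    {k : ℕ} {s : ℝ} (hsT : s ∈ T) (hk : k < P.n) (h1 : P.t k < s) (h2 : s < P.t (k + 1)) :
    lowerSumD T f g P ≤ lowerSumD T f g (P.insertPt k s hsT hk h1 h2) := by
  have hf' : ∀ t ∈ Set.Icc a b ∩ T, |(fun x => -f x) t| ≤ C := by
    intro t ht; simpa using hf t ht
  have h := P.upperSumD_insertPt_le (f := fun x => -f x) hf' hg hsT hk h1 h2
  rw [lowerSumD_eq_neg, lowerSumD_eq_neg]
  linarith

def TSPartition.ptsF (P : TSPartition T a b) : Finset ℝ :=
  (Finset.range (P.n + 1)).image P.t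

theorem TSPartition.ptsF_mem (P : TSPartition T a b) {x : ℝ} (hx : x ∈ P.ptsF) :
    x ∈ Set.Icc a b ∩ T := by
  rw [TSPartition.ptsF, Finset.mem_image] at hx
  obtain ⟨j, hj, rfl⟩ := hx
  rw [Finset.mem_range] at hj
  exact ⟨P.t_mem_Icc (by omega), P.mem j (by omega)⟩

theorem TSPartition.ptsF_insertPt (P : TSPartition T a b)
    {k : ℕ} {s : ℝ} (hsT : s ∈ T) (hk : k < P.n) (h1 : P.t k < s) (h2 : s < P.t (k + 1)) :
    (P.insertPt k s hsT hk h1 h2).ptsF = insert s P.ptsF := by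
  have hnn : (P.insertPt k s hsT hk h1 h2).n = P.n + 1 := rfl
  have htt : (P.insertPt k s hsT hk h1 h2).t = insFun P.t k s := rfl
  ext x
  simp only [TSPartition.ptsF, Finset.mem_insert, Finset.mem_image, Finset.mem_range, hnn, htt]
  constructor
  · rintro ⟨j, hj, rfl⟩
    rcases Nat.lt_or_ge k j with h | h
    · rcases Nat.lt_or_ge (k + 1) j with h' | h'
      · right
        exact ⟨j - 1, by omega, (insFun_of_gt h').symm⟩
      · left
        have : j = k + 1 := by omega
        subst this
        exact insFun_succ
    · right
      exact ⟨j, by omega, (insFun_of_le h).symm⟩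
  · rintro (rfl | ⟨j, hj, rfl⟩)
    · exact ⟨k + 1, by omega, insFun_succ⟩
    · rcases Nat.lt_or_ge k j with h | h
      · refine ⟨j + 1, by omega, ?_⟩
        rw [insFun_of_gt (by omega)]
        norm_num
      · exact ⟨j, by omega, insFun_of_le h⟩

theorem TSPartition.exists_gap (Pa : TSPartition T a b) {s : ℝ} (hs : s ∈ Set.Icc a b)
    (hns : s ∉ Pa.ptsF) : ∃ k, ∃ hk : k < Pa.n, Pa.t k < s ∧ s < Pa.t (k + 1) := by
  classical
  have hmem : ∀ j ≤ Pa.n, Pa.t j ∈ Pa.ptsF := fun j hj =>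
    Finset.mem_image_of_mem Pa.t (Finset.mem_range.mpr (by omega))
  have ha0 : Pa.t 0 ≤ s := by rw [Pa.first]; exact hs.1
  have ha' : Pa.t 0 < s := by
    rcases lt_or_eq_of_le ha0 with h | h
    · exact h
    · exact absurd (by rw [← h]; exact hmem 0 (by omega)) hns
  have hb0 : s ≤ Pa.t Pa.n := by rw [Pa.last]; exact hs.2
  have hb' : s < Pa.t Pa.n := by
    rcases lt_or_eq_of_le hb0 with h | h
    · exact h
    · exact absurd (by rw [h]; exact hmem Pa.n le_rfl) hns
  set k := Nat.findGreatest (fun j => Pa.t j < s) Pa.n with hkdef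
  have hkn : k ≤ Pa.n := Nat.findGreatest_le _
  have hPk : Pa.t k < s :=
    Nat.findGreatest_spec (P := fun j => Pa.t j < s) (Nat.zero_le Pa.n) ha'
  have hklt : k < Pa.n := by
    rcases lt_or_eq_of_le hkn with h | h
    · exact h
    · rw [h] at hPk
      exact absurd hPk (not_lt.mpr hb'.le)
  refine ⟨k, hklt, hPk, ?_⟩
  have hnot : ¬ Pa.t (k + 1) < s :=
    Nat.findGreatest_is_greatest (P := fun j => Pa.t j < s) (Nat.lt_succ_self k) (by omega)
  rcases lt_or_eq_of_le (not_lt.mp hnot) with h | h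
  · exact h
  · exact absurd (by rw [h]; exact hmem (k + 1) (by omega)) hns

theorem TSPartition.card_ptsF (P : TSPartition T a b) : P.ptsF.card = P.n + 1 := by
  rw [TSPartition.ptsF, Finset.card_image_of_injOn, Finset.card_range]
  intro i hi j hj hij
  simp only [Finset.mem_coe, Finset.mem_range] at hi hj
  by_contra hne
  rcases Nat.lt_or_ge i j with h | h
  · exact absurd hij (ne_of_lt (P.t_lt h (by omega)))
  · exact absurd hij.symm (ne_of_lt (P.t_lt (by omega) (by omega)))

theorem TSPartition.eq_of_ptsF (P Q : TSPartition T a b) (h : P.ptsF = Q.ptsF) :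
    P.n = Q.n ∧ ∀ j ≤ P.n, P.t j = Q.t j := by
  have hcard : P.n + 1 = Q.n + 1 := by
    rw [← P.card_ptsF, ← Q.card_ptsF, h]
  have hn : P.n = Q.n := by omega
  have hcP : P.ptsF.card = P.n + 1 := P.card_ptsF
  have hP : ∀ x : Fin (P.n + 1), P.t x ∈ P.ptsF := fun x =>
    Finset.mem_image_of_mem P.t (Finset.mem_range.mpr x.2)
  have hmP : StrictMono (fun x : Fin (P.n + 1) => P.t x) := fun i j hij =>
    P.t_lt hij (Nat.lt_succ_iff.mp j.2)
  have e1 := Finset.orderEmbOfFin_unique hcP hP hmP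
  have hQ : ∀ x : Fin (P.n + 1), Q.t x ∈ P.ptsF := fun x => by
    rw [h]
    exact Finset.mem_image_of_mem Q.t (Finset.mem_range.mpr (by omega))
  have hmQ : StrictMono (fun x : Fin (P.n + 1) => Q.t x) := fun i j hij =>
    Q.t_lt hij (by omega)
  have e2 := Finset.orderEmbOfFin_unique hcP hQ hmQ
  refine ⟨hn, fun j hj => ?_⟩
  have := (congrFun e1 ⟨j, by omega⟩).trans (congrFun e2 ⟨j, by omega⟩).symm
  simpa using this

theorem sums_eq_of_ptsF_eq {P Q : TSPartition T a b} (h : P.ptsF = Q.ptsF) :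
    upperSumD T f g P = upperSumD T f g Q ∧ lowerSumD T f g P = lowerSumD T f g Q := by
  obtain ⟨hn, ht⟩ := P.eq_of_ptsF Q h
  constructor
  · unfold upperSumD
    rw [← hn]
    refine Finset.sum_congr rfl fun j hj => ?_
    rw [Finset.mem_range] at hj
    rw [ht j hj.le, ht (j + 1) hj]
  · unfold lowerSumD
    rw [← hn]
    refine Finset.sum_congr rfl fun j hj => ?_
    rw [Finset.mem_range] at hj
    rw [ht j hj.le, ht (j + 1) hj]

theorem exists_refinement (hf : ∀ t ∈ Set.Icc a b ∩ T, |f t| ≤ C)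
    (hg : MonotoneOn g (Set.Icc a b ∩ T)) (P : TSPartition T a b) (S : Finset ℝ)
    (hS : ∀ x ∈ S, x ∈ Set.Icc a b ∩ T) :
    ∃ R : TSPartition T a b, R.ptsF = P.ptsF ∪ S ∧
      lowerSumD T f g P ≤ lowerSumD T f g R ∧ upperSumD T f g R ≤ upperSumD T f g P := by
  classical
  induction S using Finset.induction_on with
  | empty => exact ⟨P, by simp, le_rfl, le_rfl⟩
  | @insert s S hsS ih =>
    obtain ⟨R, hR, hRL, hRU⟩ := ih fun x hx => hS x (Finset.mem_insert_of_mem hx)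
    by_cases hmem : s ∈ R.ptsF
    · refine ⟨R, ?_, hRL, hRU⟩
      rw [hR]
      have hm' : s ∈ P.ptsF ∨ s ∈ S := by
        rw [hR] at hmem
        simpa [Finset.mem_union] using hmem
      ext x
      simp only [Finset.mem_union, Finset.mem_insert]
      constructor
      · rintro (h | h)
        · exact Or.inl h
        · exact Or.inr (Or.inr h)
      · rintro (h | rfl | h)
        · exact Or.inl h
        · exact hm'
        · exact Or.inr h
    · have hsIcc := hS s (Finset.mem_insert_self _ _)
      obtain ⟨k, hk, hk1, hk2⟩ := R.exists_gap hsIcc.1 hmem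
      refine ⟨R.insertPt k s hsIcc.2 hk hk1 hk2, ?_, ?_, ?_⟩
      · rw [R.ptsF_insertPt, hR]
        ext x
        simp only [Finset.mem_insert, Finset.mem_union]
        tauto
      · exact le_trans hRL (R.lowerSumD_insertPt_le hf hg hsIcc.2 hk hk1 hk2)
      · exact le_trans (R.upperSumD_insertPt_le hf hg hsIcc.2 hk hk1 hk2) hRU

theorem cross_le (hf : ∀ t ∈ Set.Icc a b ∩ T, |f t| ≤ C)
    (hg : MonotoneOn g (Set.Icc a b ∩ T)) (P Q : TSPartition T a b) :
    lowerSumD T f g P ≤ upperSumD T f g Q := by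
  obtain ⟨R₁, e1, hL1, _⟩ := exists_refinement hf hg P Q.ptsF fun x hx => Q.ptsF_mem hx
  obtain ⟨R₂, e2, _, hU2⟩ := exists_refinement hf hg Q P.ptsF fun x hx => P.ptsF_mem hx
  have hpts : R₁.ptsF = R₂.ptsF := by rw [e1, e2, Finset.union_comm]
  have hsums := sums_eq_of_ptsF_eq (f := f) (g := g) hpts
  calc lowerSumD T f g P ≤ lowerSumD T f g R₁ := hL1
    _ ≤ upperSumD T f g R₁ := lower_le_upper hf hg R₁
    _ = upperSumD T f g R₂ := hsums.1
    _ ≤ upperSumD T f g Q := hU2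

def trivialPartition (ha : a ∈ T) (hb : b ∈ T) (hab : a < b) : TSPartition T a b where
  n := 1
  t := fun j => if j = 0 then a else b
  npos := one_pos
  mem := by
    intro j _
    by_cases h : j = 0 <;> simp [h, ha, hb]
  first := rfl
  last := by norm_num
  mono := by
    intro j hj
    have : j = 0 := by omega
    simp [this, hab]

end Aux
/-- Integrability criterion. -/
theorem statement5 (T : Set ℝ) (hT : IsClosed T) (a b : ℝ) (ha : a ∈ T) (hb : b ∈ T)
    (hab : a < b) (f g : ℝ → ℝ) (C : ℝ)
    (hf : ∀ t ∈ Set.Icc a b ∩ T, |f t| ≤ C)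
    (hg : MonotoneOn g (Set.Icc a b ∩ T)) :
    RSDeltaIntegrable T a b f g ↔
      ∀ ε > (0 : ℝ), ∃ P : TSPartition T a b,
        upperSumD T f g P - lowerSumD T f g P < ε := by
  classical
  have P₀ : TSPartition T a b := trivialPartition ha hb hab
  have cross := fun P Q => cross_le (T := T) hf hg P Q
  have hLne : (Set.range fun P : TSPartition T a b => lowerSumD T f g P).Nonempty :=
    ⟨_, ⟨P₀, rfl⟩⟩
  have hUne : (Set.range fun P : TSPartition T a b => upperSumD T f g P).Nonempty :=
    ⟨_, ⟨P₀, rfl⟩⟩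
  have hLbdd : BddAbove (Set.range fun P : TSPartition T a b => lowerSumD T f g P) := by
    refine ⟨upperSumD T f g P₀, ?_⟩
    rintro y ⟨P, rfl⟩
    exact cross P P₀
  have hUbdd : BddBelow (Set.range fun P : TSPartition T a b => upperSumD T f g P) := by
    refine ⟨lowerSumD T f g P₀, ?_⟩
    rintro y ⟨Q, rfl⟩
    exact cross P₀ Q
  have eU : upperIntD T a b f g
      = sInf (Set.range fun P : TSPartition T a b => upperSumD T f g P) := rfl
  have eL : lowerIntD T a b f g
      = sSup (Set.range fun P : TSPartition T a b => lowerSumD T f g P) := rfl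
  constructor
  · intro hInt ε hε
    have hInt' : lowerIntD T a b f g = upperIntD T a b f g := hInt
    obtain ⟨u, ⟨P₁, rfl⟩, hu⟩ := exists_lt_of_csInf_lt hUne
      (show sInf _ < upperIntD T a b f g + ε / 2 by rw [← eU]; linarith)
    obtain ⟨l, ⟨P₂, rfl⟩, hl⟩ := exists_lt_of_lt_csSup hLne
      (show lowerIntD T a b f g - ε / 2 < sSup _ by rw [← eL]; linarith)
    obtain ⟨R₁, e1, _, hU1⟩ := exists_refinement hf hg P₁ P₂.ptsF fun x hx => P₂.ptsF_mem hx
    obtain ⟨R₂, e2, hL2, _⟩ := exists_refinement hf hg P₂ P₁.ptsF fun x hx => P₁.ptsF_mem hx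
    have hpts : R₁.ptsF = R₂.ptsF := by rw [e1, e2, Finset.union_comm]
    have hsums := sums_eq_of_ptsF_eq (f := f) (g := g) hpts
    refine ⟨R₁, ?_⟩
    have hA : upperSumD T f g R₁ < upperIntD T a b f g + ε / 2 := lt_of_le_of_lt hU1 hu
    have hB : lowerIntD T a b f g - ε / 2 < lowerSumD T f g R₁ := by
      rw [hsums.2]
      exact lt_of_lt_of_le hl hL2
    linarith
  · intro h
    have hle : lowerIntD T a b f g ≤ upperIntD T a b f g := by
      rw [eL]
      apply csSup_le hLne
      rintro l ⟨P, rfl⟩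
      rw [eU]
      apply le_csInf hUne
      rintro u ⟨Q, rfl⟩
      exact cross P Q
    have hge : ∀ ε > (0 : ℝ), upperIntD T a b f g ≤ lowerIntD T a b f g + ε := by
      intro ε hε
      obtain ⟨P, hP⟩ := h ε hε
      have h1 : upperIntD T a b f g ≤ upperSumD T f g P := by
        rw [eU]; exact csInf_le hUbdd ⟨P, rfl⟩
      have h2 : lowerSumD T f g P ≤ lowerIntD T a b f g := by
        rw [eL]; exact le_csSup hLbdd ⟨P, rfl⟩
      linarith
    exact le_antisymm hle (le_of_forall_pos_le_add hge)
end
end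

section
/- Let 𝕋 be a time scale, a,b ∈ 𝕋, a < b, g : [a,b] → ℝ strictly increasing, and f : [a,b] → ℝ strictly increasing and Riemann–Stieltjes integrable with respect to g on [a,b] ⊂ ℝ. Then ∫ₐᵇ (f|𝕋) Δ(g|𝕋) ≤ ∫ₐᵇ f dg ≤ ∫ₐᵇ (f|𝕋) ∇(g|𝕋), where the outer integrals are the Riemann–Stieltjes delta and nabla integrals on 𝕋 of the restrictions and the middle one is the classical Riemann–Stieltjes integral on [a,b]. -/
open Set Filter

noncomputable section

section Aux

open Finset in
private lemma tele_Ico (G : ℝ → ℝ) (t : ℕ → ℝ) {m n : ℕ} (h : m ≤ n) :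
    ∑ k ∈ Finset.Ico m n, (G (t (k + 1)) - G (t k)) = G (t n) - G (t m) := by
  rw [Finset.sum_Ico_eq_sub _ h, Finset.sum_range_sub (fun k => G (t k)),
    Finset.sum_range_sub (fun k => G (t k))]
  ring

namespace TSPartition

variable {T : Set ℝ} {a b : ℝ}

lemma t_mono (P : TSPartition T a b) : ∀ {i j : ℕ}, i ≤ j → j ≤ P.n → P.t i ≤ P.t j := by
  intro i j hij hj
  induction j with
  | zero => simp [Nat.le_zero.mp hij]
  | succ j ih =>
    rcases Nat.lt_or_ge i (j + 1) with h | h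
    · exact le_trans (ih (Nat.lt_succ_iff.mp h) (le_trans (Nat.le_succ j) hj))
        (P.mono j (Nat.lt_of_succ_le hj)).le
    · have : i = j + 1 := le_antisymm hij h
      simp [this]

lemma t_mem_Icc_s8 (P : TSPartition T a b) {j : ℕ} (hj : j ≤ P.n) : P.t j ∈ Set.Icc a b :=
  ⟨P.first.symm.trans_le (P.t_mono (Nat.zero_le j) hj),
   (P.t_mono hj le_rfl).trans_eq P.last⟩

lemma t_lt_s8 (P : TSPartition T a b) {i j : ℕ} (hij : i < j) (hj : j ≤ P.n) : P.t i < P.t j :=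
  lt_of_lt_of_le (P.mono i (lt_of_lt_of_le hij hj)) (P.t_mono hij hj)

lemma not_mem_Ioo (P : TSPartition T a b) {x : ℝ} (hx : ∃ i ≤ P.n, P.t i = x)
    {k : ℕ} (hk : k < P.n) : x ∉ Set.Ioo (P.t k) (P.t (k + 1)) := by
  obtain ⟨i, hi, rfl⟩ := hx
  rintro ⟨h1, h2⟩
  rcases le_or_gt i k with h | h
  · exact absurd (P.t_mono h hk.le) (not_le.mpr h1)
  · exact absurd (P.t_mono h hi) (not_le.mpr h2)

/-- The same partition viewed as a partition of the time scale `univ`. -/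
def relax (P : TSPartition T a b) : TSPartition Set.univ a b :=
  ⟨P.n, P.t, P.npos, fun _ _ => trivial, P.first, P.last, P.mono⟩

end TSPartition

variable {T : Set ℝ}

lemma tsRho_mem (hT : IsClosed T) {u v : ℝ} (hu : u ∈ T) (huv : u < v) :
    tsRho T v ∈ T ∧ u ≤ tsRho T v ∧ tsRho T v ≤ v := by
  have hne : u ∈ {s | s ∈ T ∧ s < v} := ⟨hu, huv⟩
  have hbdd : BddAbove {s | s ∈ T ∧ s < v} := ⟨v, fun s hs => hs.2.le⟩
  refine ⟨?_, le_csSup hbdd hne, csSup_le ⟨u, hne⟩ fun s hs => hs.2.le⟩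
  have h1 := csSup_mem_closure ⟨u, hne⟩ hbdd
  have h2 : closure {s | s ∈ T ∧ s < v} ⊆ T := by
    calc closure {s | s ∈ T ∧ s < v} ⊆ closure T := closure_mono fun s hs => hs.1
    _ = T := hT.closure_eq
  exact h2 h1

lemma tsSigma_mem (hT : IsClosed T) {u v : ℝ} (hv : v ∈ T) (huv : u < v) :
    tsSigma T u ∈ T ∧ u ≤ tsSigma T u ∧ tsSigma T u ≤ v := by
  have hne : v ∈ {s | s ∈ T ∧ u < s} := ⟨hv, huv⟩
  have hbdd : BddBelow {s | s ∈ T ∧ u < s} := ⟨u, fun s hs => hs.2.le⟩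
  refine ⟨?_, le_csInf ⟨v, hne⟩ fun s hs => hs.2.le, csInf_le hbdd hne⟩
  have h1 := csInf_mem_closure ⟨v, hne⟩ hbdd
  have h2 : closure {s | s ∈ T ∧ u < s} ⊆ T := by
    calc closure {s | s ∈ T ∧ u < s} ⊆ closure T := closure_mono fun s hs => hs.1
    _ = T := hT.closure_eq
  exact h2 h1

lemma tsRho_mono {u v v' : ℝ} (hu : u ∈ T) (huv : u < v) (hvv' : v ≤ v') :
    tsRho T v ≤ tsRho T v' :=
  csSup_le_csSup ⟨v', fun s hs => hs.2.le⟩ ⟨u, hu, huv⟩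
    fun s hs => ⟨hs.1, lt_of_lt_of_le hs.2 hvv'⟩

lemma tsSigma_mono {u u' v : ℝ} (hv : v ∈ T) (hu'v : u' < v) (huu' : u ≤ u') :
    tsSigma T u ≤ tsSigma T u' :=
  csInf_le_csInf ⟨u, fun s hs => hs.2.le⟩ ⟨v, hv, hu'v⟩
    fun s hs => ⟨hs.1, lt_of_le_of_lt huu' hs.2⟩

lemma tsRho_gap {u v : ℝ} (hu : u ∈ T) (huv : u < v) (hgap : Set.Ioo u v ∩ T = ∅) :
    tsRho T v = u := by
  refine le_antisymm (csSup_le ⟨u, hu, huv⟩ fun s hs => ?_)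
    (le_csSup ⟨v, fun s hs => hs.2.le⟩ ⟨hu, huv⟩)
  by_contra h
  push_neg at h
  have hmem : s ∈ Set.Ioo u v ∩ T := ⟨⟨h, hs.2⟩, hs.1⟩
  simpa [hgap] using hmem

lemma tsSigma_gap {u v : ℝ} (hv : v ∈ T) (huv : u < v) (hgap : Set.Ioo u v ∩ T = ∅) :
    tsSigma T u = v := by
  refine le_antisymm (csInf_le ⟨u, fun s hs => hs.2.le⟩ ⟨hv, huv⟩)
    (le_csInf ⟨v, hv, huv⟩ fun s hs => ?_)
  by_contra h
  push_neg at h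
  have hmem : s ∈ Set.Ioo u v ∩ T := ⟨⟨hs.2, h⟩, hs.1⟩
  simpa [hgap] using hmem

lemma tsRho_univ (v : ℝ) : tsRho Set.univ v = v := by
  have h : {s | s ∈ (Set.univ : Set ℝ) ∧ s < v} = Set.Iio v := by
    ext x; simp [Set.mem_Iio]
  rw [tsRho, h]
  exact csSup_Iio

lemma tsSigma_univ (v : ℝ) : tsSigma Set.univ v = v := by
  have h : {s | s ∈ (Set.univ : Set ℝ) ∧ v < s} = Set.Ioi v := by
    ext x; simp [Set.mem_Ioi]
  rw [tsSigma, h]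
  exact csInf_Ioi

end Aux
section WSum

variable {T : Set ℝ} {a b : ℝ} {f g : ℝ → ℝ}

/-- Generic weighted Riemann–Stieltjes style sum. -/
def wSum (g : ℝ → ℝ) (w : ℝ → ℝ → ℝ) {T : Set ℝ} {a b : ℝ} (P : TSPartition T a b) : ℝ :=
  ∑ j ∈ Finset.range P.n, w (P.t j) (P.t (j + 1)) * (g (P.t (j + 1)) - g (P.t j))

lemma dg_nonneg (hg : MonotoneOn g (Set.Icc a b)) (P : TSPartition T a b) {j : ℕ}
    (hj : j < P.n) : 0 ≤ g (P.t (j + 1)) - g (P.t j) :=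
  sub_nonneg.mpr (hg (P.t_mem_Icc_s8 hj.le) (P.t_mem_Icc_s8 hj) (P.mono j hj).le)

lemma csSup_image_mono (hf : MonotoneOn f (Set.Icc a b)) {c d : ℝ} (hdT : d ∈ T)
    (hca : c ∈ Set.Icc a b) (hdb : d ∈ Set.Icc a b) (hcd : c ≤ d) :
    sSup (f '' (Set.Icc c d ∩ T)) = f d := by
  apply IsGreatest.csSup_eq
  constructor
  · exact ⟨d, ⟨⟨hcd, le_rfl⟩, hdT⟩, rfl⟩
  · rintro y ⟨x, ⟨⟨hx1, hx2⟩, _⟩, rfl⟩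
    exact hf ⟨le_trans hca.1 hx1, le_trans hx2 hdb.2⟩ hdb hx2

lemma csInf_image_mono (hf : MonotoneOn f (Set.Icc a b)) {c d : ℝ} (hcT : c ∈ T)
    (hca : c ∈ Set.Icc a b) (hdb : d ∈ Set.Icc a b) (hcd : c ≤ d) :
    sInf (f '' (Set.Icc c d ∩ T)) = f c := by
  apply IsLeast.csInf_eq
  constructor
  · exact ⟨c, ⟨⟨le_rfl, hcd⟩, hcT⟩, rfl⟩
  · rintro y ⟨x, ⟨⟨hx1, hx2⟩, _⟩, rfl⟩
    exact hf hca ⟨le_trans hca.1 hx1, le_trans hx2 hdb.2⟩ hx1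

lemma upperSumD_eq (hT : IsClosed T) (hf : MonotoneOn f (Set.Icc a b))
    (P : TSPartition T a b) :
    upperSumD T f g P = wSum g (fun _ v => f (tsRho T v)) P := by
  refine Finset.sum_congr rfl fun j hj => ?_
  rw [Finset.mem_range] at hj
  obtain ⟨hρT, hρ1, hρ2⟩ := tsRho_mem hT (P.mem j hj.le) (P.mono j hj)
  have h1 := P.t_mem_Icc_s8 hj.le
  have h2 := P.t_mem_Icc_s8 hj
  congr 1
  exact csSup_image_mono hf hρT h1 ⟨le_trans h1.1 hρ1, le_trans hρ2 h2.2⟩ hρ1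

lemma lowerSumD_eq (hT : IsClosed T) (hf : MonotoneOn f (Set.Icc a b))
    (P : TSPartition T a b) :
    lowerSumD T f g P = wSum g (fun u _ => f u) P := by
  refine Finset.sum_congr rfl fun j hj => ?_
  rw [Finset.mem_range] at hj
  obtain ⟨hρT, hρ1, hρ2⟩ := tsRho_mem hT (P.mem j hj.le) (P.mono j hj)
  have h1 := P.t_mem_Icc_s8 hj.le
  have h2 := P.t_mem_Icc_s8 hj
  congr 1
  exact csInf_image_mono hf (P.mem j hj.le) h1 ⟨le_trans h1.1 hρ1, le_trans hρ2 h2.2⟩ hρ1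

lemma upperSumN_eq (hT : IsClosed T) (hf : MonotoneOn f (Set.Icc a b))
    (P : TSPartition T a b) :
    upperSumN T f g P = wSum g (fun _ v => f v) P := by
  refine Finset.sum_congr rfl fun j hj => ?_
  rw [Finset.mem_range] at hj
  obtain ⟨hσT, hσ1, hσ2⟩ := tsSigma_mem hT (P.mem (j + 1) hj) (P.mono j hj)
  have h1 := P.t_mem_Icc_s8 hj.le
  have h2 := P.t_mem_Icc_s8 hj
  congr 1
  exact csSup_image_mono hf (P.mem (j + 1) hj) ⟨le_trans h1.1 hσ1, le_trans hσ2 h2.2⟩ h2 hσ2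

lemma lowerSumN_eq (hT : IsClosed T) (hf : MonotoneOn f (Set.Icc a b))
    (P : TSPartition T a b) :
    lowerSumN T f g P = wSum g (fun u _ => f (tsSigma T u)) P := by
  refine Finset.sum_congr rfl fun j hj => ?_
  rw [Finset.mem_range] at hj
  obtain ⟨hσT, hσ1, hσ2⟩ := tsSigma_mem hT (P.mem (j + 1) hj) (P.mono j hj)
  have h1 := P.t_mem_Icc_s8 hj.le
  have h2 := P.t_mem_Icc_s8 hj
  congr 1
  exact csInf_image_mono hf hσT ⟨le_trans h1.1 hσ1, le_trans hσ2 h2.2⟩ h2 hσ2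

lemma wSum_le_wSum (hg : MonotoneOn g (Set.Icc a b)) {w1 w2 : ℝ → ℝ → ℝ}
    (P : TSPartition T a b)
    (h : ∀ j < P.n, w1 (P.t j) (P.t (j + 1)) ≤ w2 (P.t j) (P.t (j + 1))) :
    wSum g w1 P ≤ wSum g w2 P :=
  Finset.sum_le_sum fun j hj =>
    mul_le_mul_of_nonneg_right (h j (Finset.mem_range.mp hj))
      (dg_nonneg hg P (Finset.mem_range.mp hj))

lemma wSum_le_const (hg : MonotoneOn g (Set.Icc a b)) {w : ℝ → ℝ → ℝ} {C : ℝ}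
    (P : TSPartition T a b) (h : ∀ j < P.n, w (P.t j) (P.t (j + 1)) ≤ C) :
    wSum g w P ≤ C * (g b - g a) := by
  have h1 : wSum g w P ≤ ∑ j ∈ Finset.range P.n, C * (g (P.t (j + 1)) - g (P.t j)) :=
    Finset.sum_le_sum fun j hj =>
      mul_le_mul_of_nonneg_right (h j (Finset.mem_range.mp hj))
        (dg_nonneg hg P (Finset.mem_range.mp hj))
  calc wSum g w P ≤ _ := h1
  _ = C * (g b - g a) := by
      rw [← Finset.mul_sum, Finset.sum_range_sub (fun j => g (P.t j)), P.first, P.last]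

lemma const_le_wSum (hg : MonotoneOn g (Set.Icc a b)) {w : ℝ → ℝ → ℝ} {C : ℝ}
    (P : TSPartition T a b) (h : ∀ j < P.n, C ≤ w (P.t j) (P.t (j + 1))) :
    C * (g b - g a) ≤ wSum g w P := by
  have h1 : ∑ j ∈ Finset.range P.n, C * (g (P.t (j + 1)) - g (P.t j)) ≤ wSum g w P :=
    Finset.sum_le_sum fun j hj =>
      mul_le_mul_of_nonneg_right (h j (Finset.mem_range.mp hj))
        (dg_nonneg hg P (Finset.mem_range.mp hj))
  calc C * (g b - g a)
      = ∑ j ∈ Finset.range P.n, C * (g (P.t (j + 1)) - g (P.t j)) := by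
        rw [← Finset.mul_sum, Finset.sum_range_sub (fun j => g (P.t j)), P.first, P.last]
  _ ≤ wSum g w P := h1

/-- Refinement decreases "upper-type" weighted sums. -/
lemma wSum_refine_le (hg : MonotoneOn g (Set.Icc a b)) {w : ℝ → ℝ → ℝ}
    (hw : ∀ u v u' v' : ℝ, u' ∈ T → u ∈ T → v ∈ T → v' ∈ T → u' ∈ Set.Icc a b →
      v' ∈ Set.Icc a b → u' ≤ u → u < v → v ≤ v' → w u v ≤ w u' v')
    (P Q : TSPartition T a b) (φ : ℕ → ℕ)
    (hφ : ∀ j < Q.n, φ j < φ (j + 1)) (hφn : ∀ j ≤ Q.n, φ j ≤ P.n)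
    (h0 : φ 0 = 0) (hn : φ Q.n = P.n)
    (hpt : ∀ j ≤ Q.n, Q.t j = P.t (φ j)) :
    wSum g w P ≤ wSum g w Q := by
  have key : ∀ j ≤ Q.n,
      ∑ k ∈ Finset.range (φ j), w (P.t k) (P.t (k + 1)) * (g (P.t (k + 1)) - g (P.t k)) ≤
      ∑ i ∈ Finset.range j, w (Q.t i) (Q.t (i + 1)) * (g (Q.t (i + 1)) - g (Q.t i)) := by
    intro j hj
    induction j with
    | zero => simp [h0]
    | succ j ih =>
      have hjn : j < Q.n := hj
      have hsplit :
          ∑ k ∈ Finset.range (φ (j + 1)), w (P.t k) (P.t (k + 1)) * (g (P.t (k + 1)) - g (P.t k)) =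
          (∑ k ∈ Finset.range (φ j), w (P.t k) (P.t (k + 1)) * (g (P.t (k + 1)) - g (P.t k))) +
          ∑ k ∈ Finset.Ico (φ j) (φ (j + 1)), w (P.t k) (P.t (k + 1)) * (g (P.t (k + 1)) - g (P.t k)) := by
        simp only [Finset.range_eq_Ico]
        exact (Finset.sum_Ico_consecutive (fun k => w (P.t k) (P.t (k + 1)) * (g (P.t (k + 1)) - g (P.t k))) (Nat.zero_le _) (hφ j hjn).le).symm
      have hblock :
          ∑ k ∈ Finset.Ico (φ j) (φ (j + 1)), w (P.t k) (P.t (k + 1)) * (g (P.t (k + 1)) - g (P.t k)) ≤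
          w (Q.t j) (Q.t (j + 1)) * (g (Q.t (j + 1)) - g (Q.t j)) := by
        have hstep : ∀ k ∈ Finset.Ico (φ j) (φ (j + 1)),
            w (P.t k) (P.t (k + 1)) * (g (P.t (k + 1)) - g (P.t k)) ≤
            w (P.t (φ j)) (P.t (φ (j + 1))) * (g (P.t (k + 1)) - g (P.t k)) := by
          intro k hk
          rw [Finset.mem_Ico] at hk
          have hk2 : k < P.n := lt_of_lt_of_le hk.2 (hφn (j + 1) hj)
          refine mul_le_mul_of_nonneg_right
            (hw (P.t k) (P.t (k + 1)) (P.t (φ j)) (P.t (φ (j + 1)))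
              (P.mem (φ j) (le_trans (hφn j hjn.le) le_rfl))
              (P.mem k hk2.le) (P.mem (k + 1) hk2)
              (P.mem (φ (j + 1)) (hφn (j + 1) hj))
              (P.t_mem_Icc_s8 (hφn j hjn.le)) (P.t_mem_Icc_s8 (hφn (j + 1) hj))
              (P.t_mono hk.1 hk2.le) (P.mono k hk2)
              (P.t_mono hk.2 (hφn (j + 1) hj)))
            (dg_nonneg hg P hk2)
        calc ∑ k ∈ Finset.Ico (φ j) (φ (j + 1)), w (P.t k) (P.t (k + 1)) * (g (P.t (k + 1)) - g (P.t k))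
            ≤ ∑ k ∈ Finset.Ico (φ j) (φ (j + 1)),
              w (P.t (φ j)) (P.t (φ (j + 1))) * (g (P.t (k + 1)) - g (P.t k)) :=
              Finset.sum_le_sum hstep
        _ = w (P.t (φ j)) (P.t (φ (j + 1))) * (g (P.t (φ (j + 1))) - g (P.t (φ j))) := by
            rw [← Finset.mul_sum, tele_Ico g P.t (hφ j hjn).le]
        _ = w (Q.t j) (Q.t (j + 1)) * (g (Q.t (j + 1)) - g (Q.t j)) := by
            rw [hpt j hjn.le, hpt (j + 1) hj]
      calc ∑ k ∈ Finset.range (φ (j + 1)), w (P.t k) (P.t (k + 1)) * (g (P.t (k + 1)) - g (P.t k))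
          = _ := hsplit
      _ ≤ (∑ i ∈ Finset.range j, w (Q.t i) (Q.t (i + 1)) * (g (Q.t (i + 1)) - g (Q.t i))) +
          w (Q.t j) (Q.t (j + 1)) * (g (Q.t (j + 1)) - g (Q.t j)) :=
          add_le_add (ih hjn.le) hblock
      _ = ∑ i ∈ Finset.range (j + 1), w (Q.t i) (Q.t (i + 1)) * (g (Q.t (i + 1)) - g (Q.t i)) :=
          (Finset.sum_range_succ _ j).symm
  have := key Q.n le_rfl
  rwa [hn] at this

lemma wSum_neg (w : ℝ → ℝ → ℝ) (P : TSPartition T a b) :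
    wSum g (fun u v => -(w u v)) P = -wSum g w P := by
  simp [wSum, neg_mul, Finset.sum_neg_distrib]

/-- Refinement increases "lower-type" weighted sums. -/
lemma wSum_refine_ge (hg : MonotoneOn g (Set.Icc a b)) {w : ℝ → ℝ → ℝ}
    (hw : ∀ u v u' v' : ℝ, u' ∈ T → u ∈ T → v ∈ T → v' ∈ T → u' ∈ Set.Icc a b →
      v' ∈ Set.Icc a b → u' ≤ u → u < v → v ≤ v' → w u' v' ≤ w u v)
    (P Q : TSPartition T a b) (φ : ℕ → ℕ)
    (hφ : ∀ j < Q.n, φ j < φ (j + 1)) (hφn : ∀ j ≤ Q.n, φ j ≤ P.n)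
    (h0 : φ 0 = 0) (hn : φ Q.n = P.n)
    (hpt : ∀ j ≤ Q.n, Q.t j = P.t (φ j)) :
    wSum g w Q ≤ wSum g w P := by
  have h := wSum_refine_le hg (w := fun u v => -(w u v))
    (fun u v u' v' h1 h2 h3 h4 h5 h6 h7 h8 h9 =>
      neg_le_neg (hw u v u' v' h1 h2 h3 h4 h5 h6 h7 h8 h9))
    P Q φ hφ hφn h0 hn hpt
  rw [wSum_neg, wSum_neg] at h
  linarith

end WSum
section OfFinset

variable {T : Set ℝ} {a b : ℝ}

private lemma card_aux {a b : ℝ} {s : Finset ℝ} (hab : a < b) (has : a ∈ s) (hbs : b ∈ s) :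
    s.card = (s.card - 1) + 1 := by
  have hcard : 1 < s.card := Finset.one_lt_card.mpr ⟨a, has, b, hbs, hab.ne⟩
  omega

/-- Build a `TSPartition` from a finite set of points of `T ∩ [a,b]` containing `a` and `b`. -/
def TSPartition.ofFinset (T : Set ℝ) (a b : ℝ) (hab : a < b) (s : Finset ℝ)
    (hsub : ∀ x ∈ s, x ∈ T) (has : a ∈ s) (hbs : b ∈ s)
    (hIcc : ∀ x ∈ s, a ≤ x ∧ x ≤ b) : TSPartition T a b where
  n := s.card - 1
  t i := if hi : i < s.card - 1 + 1 then ((s.orderIsoOfFin (card_aux hab has hbs)) ⟨i, hi⟩ : ℝ)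
    else b
  npos := by
    have hcard : 1 < s.card := Finset.one_lt_card.mpr ⟨a, has, b, hbs, hab.ne⟩
    omega
  mem j hj := by
    simp only [dif_pos (Nat.lt_succ_of_le hj)]
    exact hsub _ ((s.orderIsoOfFin (card_aux hab has hbs)) ⟨j, Nat.lt_succ_of_le hj⟩).2
  first := by
    set e := s.orderIsoOfFin (card_aux hab has hbs) with he
    have h0 : (0 : ℕ) < s.card - 1 + 1 := Nat.succ_pos _
    simp only [dif_pos h0]
    have h1 : (e ⟨0, h0⟩ : ℝ) ≤ a := by
      have h2 := e.monotone (Fin.zero_le (e.symm ⟨a, has⟩))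
      calc (e ⟨0, h0⟩ : ℝ) = (e 0 : ℝ) := rfl
      _ ≤ (e (e.symm ⟨a, has⟩) : ℝ) := h2
      _ = a := by rw [OrderIso.apply_symm_apply]
    exact le_antisymm h1 (hIcc _ (e ⟨0, h0⟩).2).1
  last := by
    set e := s.orderIsoOfFin (card_aux hab has hbs) with he
    have hlast : s.card - 1 < s.card - 1 + 1 := Nat.lt_succ_self _
    simp only [dif_pos hlast]
    have h1 : b ≤ (e ⟨s.card - 1, hlast⟩ : ℝ) := by
      have h2 : e.symm ⟨b, hbs⟩ ≤ ⟨s.card - 1, hlast⟩ := Fin.le_last _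
      have h3 := e.monotone h2
      calc b = (e (e.symm ⟨b, hbs⟩) : ℝ) := by rw [OrderIso.apply_symm_apply]
      _ ≤ (e ⟨s.card - 1, hlast⟩ : ℝ) := h3
    exact le_antisymm (hIcc _ (e ⟨s.card - 1, hlast⟩).2).2 h1
  mono j hj := by
    have h1 : j < s.card - 1 + 1 := Nat.lt_succ_of_lt hj
    have h2 : j + 1 < s.card - 1 + 1 := Nat.succ_lt_succ hj
    simp only [dif_pos h1, dif_pos h2]
    exact (s.orderIsoOfFin (card_aux hab has hbs)).strictMono (by simp [Fin.lt_def])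

lemma TSPartition.ofFinset_mem (T : Set ℝ) (a b : ℝ) (hab : a < b) (s : Finset ℝ)
    (hsub : ∀ x ∈ s, x ∈ T) (has : a ∈ s) (hbs : b ∈ s)
    (hIcc : ∀ x ∈ s, a ≤ x ∧ x ≤ b) {j : ℕ}
    (hj : j ≤ (TSPartition.ofFinset T a b hab s hsub has hbs hIcc).n) :
    (TSPartition.ofFinset T a b hab s hsub has hbs hIcc).t j ∈ s := by
  classical
  have hj' : j < s.card - 1 + 1 := Nat.lt_succ_of_le hj
  show (if hi : j < s.card - 1 + 1 then
    ((s.orderIsoOfFin (card_aux hab has hbs)) ⟨j, hi⟩ : ℝ) else b) ∈ s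
  simp only [dif_pos hj']
  exact ((s.orderIsoOfFin (card_aux hab has hbs)) ⟨j, hj'⟩).2

lemma TSPartition.ofFinset_surj (T : Set ℝ) (a b : ℝ) (hab : a < b) (s : Finset ℝ)
    (hsub : ∀ x ∈ s, x ∈ T) (has : a ∈ s) (hbs : b ∈ s)
    (hIcc : ∀ x ∈ s, a ≤ x ∧ x ≤ b) {x : ℝ} (hx : x ∈ s) :
    ∃ j ≤ (TSPartition.ofFinset T a b hab s hsub has hbs hIcc).n,
      (TSPartition.ofFinset T a b hab s hsub has hbs hIcc).t j = x := by
  classical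
  set e := s.orderIsoOfFin (card_aux hab has hbs) with he
  set i := e.symm ⟨x, hx⟩ with hi
  refine ⟨(i : Fin (s.card - 1 + 1)).val, Nat.lt_succ_iff.mp i.isLt, ?_⟩
  show (if hi : (i : Fin (s.card - 1 + 1)).val < s.card - 1 + 1 then
    (e ⟨(i : Fin (s.card - 1 + 1)).val, hi⟩ : ℝ) else b) = x
  simp only [dif_pos i.isLt]
  have h1 : (⟨(i : Fin (s.card - 1 + 1)).val, i.isLt⟩ : Fin (s.card - 1 + 1)) = i := rfl
  rw [h1, hi, OrderIso.apply_symm_apply]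

/-- Given a partition `P` whose points all appear among the points of `R`,
produce the index embedding witnessing that `R` refines `P`. -/
lemma TSPartition.exists_refine_map (P R : TSPartition T a b)
    (h : ∀ j ≤ P.n, ∃ i ≤ R.n, R.t i = P.t j) :
    ∃ φ : ℕ → ℕ, (∀ j < P.n, φ j < φ (j + 1)) ∧ (∀ j ≤ P.n, φ j ≤ R.n) ∧
      φ 0 = 0 ∧ φ P.n = R.n ∧ ∀ j ≤ P.n, P.t j = R.t (φ j) := by
  classical
  choose φ hφle hφeq using fun (j : ℕ) (hj : j ≤ P.n) => h j hj
  refine ⟨fun j => if hj : j ≤ P.n then φ j hj else R.n, ?_, ?_, ?_, ?_, ?_⟩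
  · intro j hj
    have hj1 : j ≤ P.n := hj.le
    have hj2 : j + 1 ≤ P.n := hj
    simp only [dif_pos hj1, dif_pos hj2]
    by_contra hc
    push_neg at hc
    have h1 : R.t (φ (j + 1) hj2) ≤ R.t (φ j hj1) := R.t_mono hc (hφle j hj1)
    rw [hφeq, hφeq] at h1
    exact absurd (P.mono j hj) (not_lt.mpr h1)
  · intro j hj
    simp only [dif_pos hj]
    exact hφle j hj
  · have h0 : (0 : ℕ) ≤ P.n := Nat.zero_le _
    simp only [dif_pos h0]
    by_contra hc
    have hpos : 0 < φ 0 h0 := Nat.pos_of_ne_zero hc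
    have h1 : R.t 0 < R.t (φ 0 h0) := R.t_lt_s8 hpos (hφle 0 h0)
    rw [hφeq 0 h0, P.first, R.first] at h1
    exact lt_irrefl a h1
  · have h0 : P.n ≤ P.n := le_rfl
    simp only [dif_pos h0]
    by_contra hc
    have hlt : φ P.n h0 < R.n := lt_of_le_of_ne (hφle P.n h0) hc
    have h1 : R.t (φ P.n h0) < R.t R.n := R.t_lt_s8 hlt le_rfl
    rw [hφeq P.n h0, P.last, R.last] at h1
    exact lt_irrefl b h1
  · intro j hj
    simp only [dif_pos hj]
    exact (hφeq j hj).symm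

/-- Common refinement of two partitions. -/
lemma TSPartition.exists_common_refinement (hab : a < b) (P Q : TSPartition T a b) :
    ∃ R : TSPartition T a b,
      (∃ φ : ℕ → ℕ, (∀ j < P.n, φ j < φ (j + 1)) ∧ (∀ j ≤ P.n, φ j ≤ R.n) ∧
        φ 0 = 0 ∧ φ P.n = R.n ∧ ∀ j ≤ P.n, P.t j = R.t (φ j)) ∧
      (∃ ψ : ℕ → ℕ, (∀ j < Q.n, ψ j < ψ (j + 1)) ∧ (∀ j ≤ Q.n, ψ j ≤ R.n) ∧
        ψ 0 = 0 ∧ ψ Q.n = R.n ∧ ∀ j ≤ Q.n, Q.t j = R.t (ψ j)) := by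
  classical
  set s : Finset ℝ := (Finset.range (P.n + 1)).image P.t ∪ (Finset.range (Q.n + 1)).image Q.t
    with hs
  have hsub : ∀ x ∈ s, x ∈ T := by
    intro x hx
    rw [hs, Finset.mem_union] at hx
    rcases hx with hx | hx <;> obtain ⟨j, hj, rfl⟩ := Finset.mem_image.mp hx
    · exact P.mem j (Nat.lt_succ_iff.mp (Finset.mem_range.mp hj))
    · exact Q.mem j (Nat.lt_succ_iff.mp (Finset.mem_range.mp hj))
  have has : a ∈ s := by
    rw [hs, Finset.mem_union]
    exact Or.inl (Finset.mem_image.mpr ⟨0, Finset.mem_range.mpr (Nat.succ_pos _), P.first⟩)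
  have hbs : b ∈ s := by
    rw [hs, Finset.mem_union]
    exact Or.inl (Finset.mem_image.mpr ⟨P.n, Finset.mem_range.mpr (Nat.lt_succ_self _), P.last⟩)
  have hIcc : ∀ x ∈ s, a ≤ x ∧ x ≤ b := by
    intro x hx
    rw [hs, Finset.mem_union] at hx
    rcases hx with hx | hx <;> obtain ⟨j, hj, rfl⟩ := Finset.mem_image.mp hx
    · have := P.t_mem_Icc_s8 (Nat.lt_succ_iff.mp (Finset.mem_range.mp hj))
      exact ⟨this.1, this.2⟩
    · have := Q.t_mem_Icc_s8 (Nat.lt_succ_iff.mp (Finset.mem_range.mp hj))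
      exact ⟨this.1, this.2⟩
  refine ⟨TSPartition.ofFinset T a b hab s hsub has hbs hIcc, ?_, ?_⟩
  · apply TSPartition.exists_refine_map
    intro j hj
    have : P.t j ∈ s := by
      rw [hs, Finset.mem_union]
      exact Or.inl (Finset.mem_image.mpr ⟨j, Finset.mem_range.mpr (Nat.lt_succ_of_le hj), rfl⟩)
    obtain ⟨i, hi, hieq⟩ := TSPartition.ofFinset_surj T a b hab s hsub has hbs hIcc this
    exact ⟨i, hi, hieq⟩
  · apply TSPartition.exists_refine_map
    intro j hj
    have : Q.t j ∈ s := by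
      rw [hs, Finset.mem_union]
      exact Or.inr (Finset.mem_image.mpr ⟨j, Finset.mem_range.mpr (Nat.lt_succ_of_le hj), rfl⟩)
    obtain ⟨i, hi, hieq⟩ := TSPartition.ofFinset_surj T a b hab s hsub has hbs hIcc this
    exact ⟨i, hi, hieq⟩

end OfFinset
section KeyEst

variable {T : Set ℝ} {a b : ℝ} {f g : ℝ → ℝ}

/-- Increments of `g` over disjoint subintervals of `[s, s']` sum to at most `g s' - g s`. -/
lemma sum_dg_le (hg : MonotoneOn g (Set.Icc a b)) (P : TSPartition T a b) (K : Finset ℕ)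
    (hK : K ⊆ Finset.range P.n) {s s' : ℝ} (hs : s ∈ Set.Icc a b) (hs' : s' ∈ Set.Icc a b)
    (hss' : s ≤ s') (h : ∀ k ∈ K, s ≤ P.t k ∧ P.t (k + 1) ≤ s') :
    ∑ k ∈ K, (g (P.t (k + 1)) - g (P.t k)) ≤ g s' - g s := by
  rcases K.eq_empty_or_nonempty with rfl | hne
  · simpa using sub_nonneg.mpr (hg hs hs' hss')
  · set m := K.min' hne
    set M := K.max' hne
    have hmK : m ∈ K := K.min'_mem hne
    have hMK : M ∈ K := K.max'_mem hne
    have hMn : M < P.n := Finset.mem_range.mp (hK hMK)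
    have hsub : K ⊆ Finset.Ico m (M + 1) := fun k hk =>
      Finset.mem_Ico.mpr ⟨K.min'_le k hk, Nat.lt_succ_of_le (K.le_max' k hk)⟩
    have h1 : ∑ k ∈ K, (g (P.t (k + 1)) - g (P.t k)) ≤
        ∑ k ∈ Finset.Ico m (M + 1), (g (P.t (k + 1)) - g (P.t k)) := by
      apply Finset.sum_le_sum_of_subset_of_nonneg hsub
      intro k hk _
      have hk2 : k < P.n := lt_of_lt_of_le (Finset.mem_Ico.mp hk).2 hMn
      exact dg_nonneg hg P hk2
    have h2 : ∑ k ∈ Finset.Ico m (M + 1), (g (P.t (k + 1)) - g (P.t k)) =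
        g (P.t (M + 1)) - g (P.t m) :=
      tele_Ico g P.t (Nat.lt_succ_of_le (K.min'_le M hMK)).le
    have h3 : g (P.t (M + 1)) ≤ g s' := hg (P.t_mem_Icc_s8 hMn) hs' (h M hMK).2
    have h4 : g s ≤ g (P.t m) := hg hs (P.t_mem_Icc_s8 (Finset.mem_range.mp (hK hmK)).le)
      (h m hmK).1
    calc ∑ k ∈ K, (g (P.t (k + 1)) - g (P.t k)) ≤ _ := h1
    _ = g (P.t (M + 1)) - g (P.t m) := h2
    _ ≤ g s' - g s := sub_le_sub h3 h4

/-- The key estimate: a partition `P` of the time scale whose intervals each contain either no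
point of `Q` or no point of `T` in their interior controls oscillation-type sums by the
corresponding sum for `Q`. -/
lemma key_est (hf : MonotoneOn f (Set.Icc a b)) (hg : MonotoneOn g (Set.Icc a b))
    (P : TSPartition T a b) (Q : TSPartition Set.univ a b)
    (hsep : ∀ k < P.n, (Set.Ioo (P.t k) (P.t (k + 1)) ∩ T).Nonempty →
      ∀ j ≤ Q.n, Q.t j ∉ Set.Ioo (P.t k) (P.t (k + 1)))
    (c : ℕ → ℝ)
    (hc0 : ∀ k < P.n, ¬(Set.Ioo (P.t k) (P.t (k + 1)) ∩ T).Nonempty → c k = 0)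
    (hcnn : ∀ k < P.n, 0 ≤ c k)
    (hcb : ∀ k < P.n, ∀ u v : ℝ, u ∈ Set.Icc a b → v ∈ Set.Icc a b → u ≤ P.t k →
      P.t (k + 1) ≤ v → c k ≤ f v - f u) :
    ∑ k ∈ Finset.range P.n, c k * (g (P.t (k + 1)) - g (P.t k)) ≤
    ∑ j ∈ Finset.range Q.n, (f (Q.t (j + 1)) - f (Q.t j)) * (g (Q.t (j + 1)) - g (Q.t j)) := by
  classical
  set J : ℕ → ℕ := fun k => Nat.findGreatest (fun j => Q.t j ≤ P.t k) Q.n with hJ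
  have hJle : ∀ k, J k ≤ Q.n := fun k => Nat.findGreatest_le Q.n
  have hJ1 : ∀ k < P.n, Q.t (J k) ≤ P.t k := by
    intro k hk
    exact Nat.findGreatest_spec (P := fun j => Q.t j ≤ P.t k) (Nat.zero_le _)
      (show Q.t 0 ≤ P.t k by rw [Q.first]; exact (P.t_mem_Icc_s8 hk.le).1)
  have hJlt : ∀ k < P.n, J k < Q.n := by
    intro k hk
    rcases lt_or_eq_of_le (hJle k) with h | h
    · exact h
    · exfalso
      have h1 : Q.t (J k) ≤ P.t k := hJ1 k hk
      rw [h, Q.last] at h1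
      exact absurd (P.t_mem_Icc_s8 hk).2 (not_le.mpr (lt_of_le_of_lt h1 (P.mono k hk)))
  have hJgt : ∀ k < P.n, P.t k < Q.t (J k + 1) := by
    intro k hk
    have := Nat.findGreatest_is_greatest (P := fun j => Q.t j ≤ P.t k)
      (Nat.lt_succ_self (J k)) (hJlt k hk)
    exact not_le.mp this
  set F := (Finset.range P.n).filter
    (fun k => (Set.Ioo (P.t k) (P.t (k + 1)) ∩ T).Nonempty) with hF
  have hFrange : F ⊆ Finset.range P.n := Finset.filter_subset _ _
  have hup : ∀ k ∈ F, P.t (k + 1) ≤ Q.t (J k + 1) := by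
    intro k hk
    rw [hF, Finset.mem_filter, Finset.mem_range] at hk
    have hnotin := hsep k hk.1 hk.2 (J k + 1) (hJlt k hk.1)
    by_contra h
    push_neg at h
    exact hnotin ⟨hJgt k hk.1, h⟩
  have hQicc : ∀ j ≤ Q.n, Q.t j ∈ Set.Icc a b := fun j hj => Q.t_mem_Icc_s8 hj
  have hbound : ∀ k ∈ F, c k ≤ f (Q.t (J k + 1)) - f (Q.t (J k)) := by
    intro k hk
    have hk' := hk
    rw [hF, Finset.mem_filter, Finset.mem_range] at hk'
    exact hcb k hk'.1 (Q.t (J k)) (Q.t (J k + 1)) (hQicc _ (hJle k))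
      (hQicc _ (hJlt k hk'.1)) (hJ1 k hk'.1) (hup k hk)
  have hsplit := Finset.sum_filter_add_sum_filter_not (Finset.range P.n)
    (fun k => (Set.Ioo (P.t k) (P.t (k + 1)) ∩ T).Nonempty)
    (fun k => c k * (g (P.t (k + 1)) - g (P.t k)))
  have hzero : ∑ k ∈ (Finset.range P.n).filter
      (fun k => ¬(Set.Ioo (P.t k) (P.t (k + 1)) ∩ T).Nonempty),
      c k * (g (P.t (k + 1)) - g (P.t k)) = 0 := by
    apply Finset.sum_eq_zero
    intro k hk
    rw [Finset.mem_filter, Finset.mem_range] at hk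
    rw [hc0 k hk.1 hk.2, zero_mul]
  have hstep1 : ∑ k ∈ Finset.range P.n, c k * (g (P.t (k + 1)) - g (P.t k)) =
      ∑ k ∈ F, c k * (g (P.t (k + 1)) - g (P.t k)) := by
    rw [← hsplit, hzero, add_zero]
  have hstep2 : ∑ k ∈ F, c k * (g (P.t (k + 1)) - g (P.t k)) ≤
      ∑ k ∈ F, (f (Q.t (J k + 1)) - f (Q.t (J k))) * (g (P.t (k + 1)) - g (P.t k)) := by
    apply Finset.sum_le_sum
    intro k hk
    have hk2 : k < P.n := Finset.mem_range.mp (hFrange hk)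
    exact mul_le_mul_of_nonneg_right (hbound k hk) (dg_nonneg hg P hk2)
  have hstep3 : ∑ j ∈ Finset.range Q.n, ∑ k ∈ F.filter (fun k => J k = j),
      (f (Q.t (J k + 1)) - f (Q.t (J k))) * (g (P.t (k + 1)) - g (P.t k)) =
      ∑ k ∈ F, (f (Q.t (J k + 1)) - f (Q.t (J k))) * (g (P.t (k + 1)) - g (P.t k)) :=
    Finset.sum_fiberwise_of_maps_to
      (fun k hk => Finset.mem_range.mpr (hJlt k (Finset.mem_range.mp (hFrange hk)))) _
  have hstep4 : ∀ j ∈ Finset.range Q.n,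
      ∑ k ∈ F.filter (fun k => J k = j),
        (f (Q.t (J k + 1)) - f (Q.t (J k))) * (g (P.t (k + 1)) - g (P.t k)) ≤
      (f (Q.t (j + 1)) - f (Q.t j)) * (g (Q.t (j + 1)) - g (Q.t j)) := by
    intro j hj
    rw [Finset.mem_range] at hj
    have heq : ∑ k ∈ F.filter (fun k => J k = j),
        (f (Q.t (J k + 1)) - f (Q.t (J k))) * (g (P.t (k + 1)) - g (P.t k)) =
        (f (Q.t (j + 1)) - f (Q.t j)) * ∑ k ∈ F.filter (fun k => J k = j),
          (g (P.t (k + 1)) - g (P.t k)) := by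
      rw [Finset.mul_sum]
      apply Finset.sum_congr rfl
      intro k hk
      rw [(Finset.mem_filter.mp hk).2]
    rw [heq]
    have hXnn : 0 ≤ f (Q.t (j + 1)) - f (Q.t j) :=
      sub_nonneg.mpr (hf (hQicc j hj.le) (hQicc (j + 1) hj) (Q.mono j hj).le)
    apply mul_le_mul_of_nonneg_left ?_ hXnn
    apply sum_dg_le hg P _ (fun k hk => hFrange (Finset.mem_filter.mp hk).1)
      (hQicc j hj.le) (hQicc (j + 1) hj) (Q.mono j hj).le
    intro k hk
    rw [Finset.mem_filter] at hk
    have hkF := hk.1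
    have hkJ := hk.2
    have hk2 : k < P.n := Finset.mem_range.mp (hFrange hkF)
    constructor
    · rw [← hkJ]; exact hJ1 k hk2
    · rw [← hkJ]; exact hup k hkF
  calc ∑ k ∈ Finset.range P.n, c k * (g (P.t (k + 1)) - g (P.t k))
      = ∑ k ∈ F, c k * (g (P.t (k + 1)) - g (P.t k)) := hstep1
  _ ≤ ∑ k ∈ F, (f (Q.t (J k + 1)) - f (Q.t (J k))) * (g (P.t (k + 1)) - g (P.t k)) := hstep2
  _ = ∑ j ∈ Finset.range Q.n, ∑ k ∈ F.filter (fun k => J k = j),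
      (f (Q.t (J k + 1)) - f (Q.t (J k))) * (g (P.t (k + 1)) - g (P.t k)) := hstep3.symm
  _ ≤ ∑ j ∈ Finset.range Q.n, (f (Q.t (j + 1)) - f (Q.t j)) * (g (Q.t (j + 1)) - g (Q.t j)) :=
      Finset.sum_le_sum hstep4

end KeyEst
section Transfer

variable {T : Set ℝ} {a b : ℝ} {f g : ℝ → ℝ}

lemma univ_osc_eq (hf : MonotoneOn f (Set.Icc a b)) (Q : TSPartition Set.univ a b) :
    upperSumD Set.univ f g Q - lowerSumD Set.univ f g Q =
    ∑ j ∈ Finset.range Q.n, (f (Q.t (j + 1)) - f (Q.t j)) * (g (Q.t (j + 1)) - g (Q.t j)) := by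
  rw [upperSumD_eq isClosed_univ hf, lowerSumD_eq isClosed_univ hf, wSum, wSum,
    ← Finset.sum_sub_distrib]
  apply Finset.sum_congr rfl
  intro j _
  rw [tsRho_univ, ← sub_mul]

lemma exists_transfer (hT : IsClosed T) (ha : a ∈ T) (hb : b ∈ T) (hab : a < b)
    (hf : MonotoneOn f (Set.Icc a b)) (hg : MonotoneOn g (Set.Icc a b))
    (Q : TSPartition Set.univ a b) :
    ∃ P : TSPartition T a b,
      upperSumD T f g P - lowerSumD T f g P ≤
        upperSumD Set.univ f g Q - lowerSumD Set.univ f g Q ∧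
      upperSumN T f g P - lowerSumN T f g P ≤
        upperSumD Set.univ f g Q - lowerSumD Set.univ f g Q := by
  classical
  set al : ℕ → ℝ := fun j => sSup (T ∩ Set.Icc a (Q.t j)) with hal_def
  set be : ℕ → ℝ := fun j => sInf (T ∩ Set.Icc (Q.t j) b) with hbe_def
  have hal : ∀ j ≤ Q.n, al j ∈ T ∩ Set.Icc a (Q.t j) := by
    intro j hj
    exact (hT.inter isClosed_Icc).csSup_mem
      ⟨a, ha, le_rfl, (Q.t_mem_Icc_s8 hj).1⟩ ⟨Q.t j, fun x hx => hx.2.2⟩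
  have hbe : ∀ j ≤ Q.n, be j ∈ T ∩ Set.Icc (Q.t j) b := by
    intro j hj
    exact (hT.inter isClosed_Icc).csInf_mem
      ⟨b, hb, (Q.t_mem_Icc_s8 hj).2, le_rfl⟩ ⟨Q.t j, fun x hx => hx.2.1⟩
  set s : Finset ℝ := (Finset.range (Q.n + 1)).image al ∪ (Finset.range (Q.n + 1)).image be
    with hs
  have hsub : ∀ x ∈ s, x ∈ T := by
    intro x hx
    rw [hs, Finset.mem_union] at hx
    rcases hx with hx | hx <;> obtain ⟨j, hj, rfl⟩ := Finset.mem_image.mp hx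
    · exact (hal j (Nat.lt_succ_iff.mp (Finset.mem_range.mp hj))).1
    · exact (hbe j (Nat.lt_succ_iff.mp (Finset.mem_range.mp hj))).1
  have hal0 : al 0 = a := by
    have h1 := hal 0 (Nat.zero_le _)
    rw [Q.first] at h1
    exact le_antisymm h1.2.2 h1.2.1
  have hben : be Q.n = b := by
    have h1 := hbe Q.n le_rfl
    rw [Q.last] at h1
    exact le_antisymm h1.2.2 h1.2.1
  have has : a ∈ s := by
    rw [hs, Finset.mem_union]
    exact Or.inl (Finset.mem_image.mpr ⟨0, Finset.mem_range.mpr (Nat.succ_pos _), hal0⟩)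
  have hbs : b ∈ s := by
    rw [hs, Finset.mem_union]
    exact Or.inr (Finset.mem_image.mpr ⟨Q.n, Finset.mem_range.mpr (Nat.lt_succ_self _), hben⟩)
  have hIcc : ∀ x ∈ s, a ≤ x ∧ x ≤ b := by
    intro x hx
    rw [hs, Finset.mem_union] at hx
    rcases hx with hx | hx <;> obtain ⟨j, hj, rfl⟩ := Finset.mem_image.mp hx
    · have h1 := hal j (Nat.lt_succ_iff.mp (Finset.mem_range.mp hj))
      exact ⟨h1.2.1, le_trans h1.2.2 (Q.t_mem_Icc_s8 (Nat.lt_succ_iff.mp (Finset.mem_range.mp hj))).2⟩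
    · have h1 := hbe j (Nat.lt_succ_iff.mp (Finset.mem_range.mp hj))
      exact ⟨le_trans (Q.t_mem_Icc_s8 (Nat.lt_succ_iff.mp (Finset.mem_range.mp hj))).1 h1.2.1,
        h1.2.2⟩
  set P : TSPartition T a b := TSPartition.ofFinset T a b hab s hsub has hbs hIcc with hP
  have hnotIoo : ∀ x ∈ s, ∀ k < P.n, x ∉ Set.Ioo (P.t k) (P.t (k + 1)) := by
    intro x hx k hk
    obtain ⟨j, hj, hjeq⟩ := TSPartition.ofFinset_surj T a b hab s hsub has hbs hIcc hx
    exact P.not_mem_Ioo ⟨j, hj, hjeq⟩ hk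
  have hsep : ∀ k < P.n, (Set.Ioo (P.t k) (P.t (k + 1)) ∩ T).Nonempty →
      ∀ j ≤ Q.n, Q.t j ∉ Set.Ioo (P.t k) (P.t (k + 1)) := by
    rintro k hk ⟨τ, hτIoo, hτT⟩ j hj hQj
    have hPk := P.t_mem_Icc_s8 hk.le
    have hPk1 := P.t_mem_Icc_s8 hk
    rcases le_or_gt τ (Q.t j) with h | h
    · have haj : al j ∈ s := by
        rw [hs, Finset.mem_union]
        exact Or.inl (Finset.mem_image.mpr ⟨j, Finset.mem_range.mpr (Nat.lt_succ_of_le hj), rfl⟩)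
      have h1 : τ ≤ al j := le_csSup ⟨Q.t j, fun x hx => hx.2.2⟩
        ⟨hτT, le_trans hPk.1 hτIoo.1.le, h⟩
      have h2 : al j ≤ Q.t j := (hal j hj).2.2
      exact hnotIoo (al j) haj k hk
        ⟨lt_of_lt_of_le hτIoo.1 h1, lt_of_le_of_lt h2 hQj.2⟩
    · have hbj : be j ∈ s := by
        rw [hs, Finset.mem_union]
        exact Or.inr (Finset.mem_image.mpr ⟨j, Finset.mem_range.mpr (Nat.lt_succ_of_le hj), rfl⟩)
      have h1 : be j ≤ τ := csInf_le ⟨Q.t j, fun x hx => hx.2.1⟩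
        ⟨hτT, h.le, le_trans hτIoo.2.le hPk1.2⟩
      have h2 : Q.t j ≤ be j := (hbe j hj).2.1
      exact hnotIoo (be j) hbj k hk
        ⟨lt_of_lt_of_le hQj.1 h2, lt_of_le_of_lt h1 hτIoo.2⟩
  refine ⟨P, ?_, ?_⟩
  · -- delta estimate
    set c : ℕ → ℝ := fun k => f (tsRho T (P.t (k + 1))) - f (P.t k) with hc
    have hLHS : upperSumD T f g P - lowerSumD T f g P =
        ∑ k ∈ Finset.range P.n, c k * (g (P.t (k + 1)) - g (P.t k)) := by
      rw [upperSumD_eq hT hf, lowerSumD_eq hT hf, wSum, wSum, ← Finset.sum_sub_distrib]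
      apply Finset.sum_congr rfl
      intro k _
      rw [hc, ← sub_mul]
    rw [hLHS, univ_osc_eq hf]
    apply key_est hf hg P Q hsep
    · intro k hk hne
      have hgap : Set.Ioo (P.t k) (P.t (k + 1)) ∩ T = ∅ :=
        Set.not_nonempty_iff_eq_empty.mp hne
      rw [hc]
      simp only
      rw [tsRho_gap (P.mem k hk.le) (P.mono k hk) hgap, sub_self]
    · intro k hk
      obtain ⟨hρT, hρ1, hρ2⟩ := tsRho_mem hT (P.mem k hk.le) (P.mono k hk)
      have h1 := P.t_mem_Icc_s8 hk.le
      have h2 := P.t_mem_Icc_s8 hk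
      exact sub_nonneg.mpr (hf h1 ⟨le_trans h1.1 hρ1, le_trans hρ2 h2.2⟩ hρ1)
    · intro k hk u v hu hv huP hPv
      obtain ⟨hρT, hρ1, hρ2⟩ := tsRho_mem hT (P.mem k hk.le) (P.mono k hk)
      have h1 := P.t_mem_Icc_s8 hk.le
      have h2 := P.t_mem_Icc_s8 hk
      have hρIcc : tsRho T (P.t (k + 1)) ∈ Set.Icc a b :=
        ⟨le_trans h1.1 hρ1, le_trans hρ2 h2.2⟩
      exact sub_le_sub (hf hρIcc hv (le_trans hρ2 hPv)) (hf hu h1 huP)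
  · -- nabla estimate
    set c : ℕ → ℝ := fun k => f (P.t (k + 1)) - f (tsSigma T (P.t k)) with hc
    have hLHS : upperSumN T f g P - lowerSumN T f g P =
        ∑ k ∈ Finset.range P.n, c k * (g (P.t (k + 1)) - g (P.t k)) := by
      rw [upperSumN_eq hT hf, lowerSumN_eq hT hf, wSum, wSum, ← Finset.sum_sub_distrib]
      apply Finset.sum_congr rfl
      intro k _
      rw [hc, ← sub_mul]
    rw [hLHS, univ_osc_eq hf]
    apply key_est hf hg P Q hsep
    · intro k hk hne
      have hgap : Set.Ioo (P.t k) (P.t (k + 1)) ∩ T = ∅ :=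
        Set.not_nonempty_iff_eq_empty.mp hne
      rw [hc]
      simp only
      rw [tsSigma_gap (P.mem (k + 1) hk) (P.mono k hk) hgap, sub_self]
    · intro k hk
      obtain ⟨hσT, hσ1, hσ2⟩ := tsSigma_mem hT (P.mem (k + 1) hk) (P.mono k hk)
      have h1 := P.t_mem_Icc_s8 hk.le
      have h2 := P.t_mem_Icc_s8 hk
      exact sub_nonneg.mpr (hf ⟨le_trans h1.1 hσ1, le_trans hσ2 h2.2⟩ h2 hσ2)
    · intro k hk u v hu hv huP hPv
      obtain ⟨hσT, hσ1, hσ2⟩ := tsSigma_mem hT (P.mem (k + 1) hk) (P.mono k hk)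
      have h1 := P.t_mem_Icc_s8 hk.le
      have h2 := P.t_mem_Icc_s8 hk
      have hσIcc : tsSigma T (P.t k) ∈ Set.Icc a b :=
        ⟨le_trans h1.1 hσ1, le_trans hσ2 h2.2⟩
      exact sub_le_sub (hf h2 hv hPv) (hf hu hσIcc (le_trans huP hσ1))

end Transfer
section Integrals

variable {T : Set ℝ} {a b : ℝ} {f g : ℝ → ℝ}

/-- The trivial two-point partition. -/
def TSPartition.two (ha : a ∈ T) (hb : b ∈ T) (hab : a < b) : TSPartition T a b where
  n := 1
  t i := if i = 0 then a else b
  npos := Nat.one_pos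
  mem j _ := by
    by_cases h : j = 0 <;> simp [h, ha, hb]
  first := by simp
  last := by simp
  mono j hj := by
    interval_cases j
    simpa using hab

variable (hT : IsClosed T) (ha : a ∈ T) (hb : b ∈ T) (hab : a < b)
  (hf : MonotoneOn f (Set.Icc a b)) (hg : MonotoneOn g (Set.Icc a b))

section Bounds

include hT hab hf hg

lemma lowerSumD_le_const (P : TSPartition T a b) :
    lowerSumD T f g P ≤ f b * (g b - g a) := by
  rw [lowerSumD_eq hT hf]
  exact wSum_le_const hg P fun j hj =>
    hf (P.t_mem_Icc_s8 hj.le) ⟨hab.le, le_rfl⟩ (P.t_mem_Icc_s8 hj.le).2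

lemma lowerSumN_le_const (P : TSPartition T a b) :
    lowerSumN T f g P ≤ f b * (g b - g a) := by
  rw [lowerSumN_eq hT hf]
  refine wSum_le_const hg P fun j hj => ?_
  obtain ⟨hσT, hσ1, hσ2⟩ := tsSigma_mem hT (P.mem (j + 1) hj) (P.mono j hj)
  have h1 := P.t_mem_Icc_s8 hj.le
  have h2 := P.t_mem_Icc_s8 hj
  exact hf ⟨le_trans h1.1 hσ1, le_trans hσ2 h2.2⟩ ⟨hab.le, le_rfl⟩ (le_trans hσ2 h2.2)

lemma const_le_upperSumD (P : TSPartition T a b) :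
    f a * (g b - g a) ≤ upperSumD T f g P := by
  rw [upperSumD_eq hT hf]
  refine const_le_wSum hg P fun j hj => ?_
  obtain ⟨hρT, hρ1, hρ2⟩ := tsRho_mem hT (P.mem j hj.le) (P.mono j hj)
  have h1 := P.t_mem_Icc_s8 hj.le
  have h2 := P.t_mem_Icc_s8 hj
  exact hf ⟨le_rfl, hab.le⟩ ⟨le_trans h1.1 hρ1, le_trans hρ2 h2.2⟩ (le_trans h1.1 hρ1)

lemma const_le_upperSumN (P : TSPartition T a b) :
    f a * (g b - g a) ≤ upperSumN T f g P := by
  rw [upperSumN_eq hT hf]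
  exact const_le_wSum hg P fun j hj =>
    hf ⟨le_rfl, hab.le⟩ (P.t_mem_Icc_s8 hj) (P.t_mem_Icc_s8 hj).1

lemma bddAbove_lowerD :
    BddAbove (Set.range fun P : TSPartition T a b => lowerSumD T f g P) := by
  refine ⟨f b * (g b - g a), ?_⟩
  rintro x ⟨P, rfl⟩
  exact lowerSumD_le_const hT hab hf hg P

lemma bddAbove_lowerN :
    BddAbove (Set.range fun P : TSPartition T a b => lowerSumN T f g P) := by
  refine ⟨f b * (g b - g a), ?_⟩
  rintro x ⟨P, rfl⟩
  exact lowerSumN_le_const hT hab hf hg P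

lemma bddBelow_upperD :
    BddBelow (Set.range fun P : TSPartition T a b => upperSumD T f g P) := by
  refine ⟨f a * (g b - g a), ?_⟩
  rintro x ⟨P, rfl⟩
  exact const_le_upperSumD hT hab hf hg P

lemma bddBelow_upperN :
    BddBelow (Set.range fun P : TSPartition T a b => upperSumN T f g P) := by
  refine ⟨f a * (g b - g a), ?_⟩
  rintro x ⟨P, rfl⟩
  exact const_le_upperSumN hT hab hf hg P

lemma lowerSumD_le_upperSumD (P : TSPartition T a b) :
    lowerSumD T f g P ≤ upperSumD T f g P := by
  rw [lowerSumD_eq hT hf, upperSumD_eq hT hf]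
  refine wSum_le_wSum hg P fun j hj => ?_
  obtain ⟨hρT, hρ1, hρ2⟩ := tsRho_mem hT (P.mem j hj.le) (P.mono j hj)
  have h1 := P.t_mem_Icc_s8 hj.le
  have h2 := P.t_mem_Icc_s8 hj
  exact hf h1 ⟨le_trans h1.1 hρ1, le_trans hρ2 h2.2⟩ hρ1

lemma lowerSumN_le_upperSumN (P : TSPartition T a b) :
    lowerSumN T f g P ≤ upperSumN T f g P := by
  rw [lowerSumN_eq hT hf, upperSumN_eq hT hf]
  refine wSum_le_wSum hg P fun j hj => ?_
  obtain ⟨hσT, hσ1, hσ2⟩ := tsSigma_mem hT (P.mem (j + 1) hj) (P.mono j hj)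
  have h1 := P.t_mem_Icc_s8 hj.le
  have h2 := P.t_mem_Icc_s8 hj
  exact hf ⟨le_trans h1.1 hσ1, le_trans hσ2 h2.2⟩ h2 hσ2

/-- Refinement increases lower delta sums. -/
lemma lowerSumD_refine (P R : TSPartition T a b) (φ : ℕ → ℕ)
    (hφ : ∀ j < P.n, φ j < φ (j + 1)) (hφn : ∀ j ≤ P.n, φ j ≤ R.n)
    (h0 : φ 0 = 0) (hn : φ P.n = R.n) (hpt : ∀ j ≤ P.n, P.t j = R.t (φ j)) :
    lowerSumD T f g P ≤ lowerSumD T f g R := by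
  rw [lowerSumD_eq hT hf, lowerSumD_eq hT hf]
  refine wSum_refine_ge hg (w := fun u _ => f u) ?_ R P φ hφ hφn h0 hn hpt
  intro u v u' v' hu'T huT hvT hv'T hu' hv' h7 h8 h9
  exact hf hu' ⟨le_trans hu'.1 h7, le_trans (le_trans h8.le h9) hv'.2⟩ h7

lemma lowerSumN_refine (P R : TSPartition T a b) (φ : ℕ → ℕ)
    (hφ : ∀ j < P.n, φ j < φ (j + 1)) (hφn : ∀ j ≤ P.n, φ j ≤ R.n)
    (h0 : φ 0 = 0) (hn : φ P.n = R.n) (hpt : ∀ j ≤ P.n, P.t j = R.t (φ j)) :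
    lowerSumN T f g P ≤ lowerSumN T f g R := by
  rw [lowerSumN_eq hT hf, lowerSumN_eq hT hf]
  refine wSum_refine_ge hg (w := fun u _ => f (tsSigma T u)) ?_ R P φ hφ hφn h0 hn hpt
  intro u v u' v' hu'T huT hvT hv'T hu' hv' h7 h8 h9
  have huIcc : u ∈ Set.Icc a b := ⟨le_trans hu'.1 h7, le_trans (le_trans h8.le h9) hv'.2⟩
  have hvIcc : v ∈ Set.Icc a b := ⟨le_trans huIcc.1 h8.le, le_trans h9 hv'.2⟩
  obtain ⟨hσ'T, hσ'1, hσ'2⟩ := tsSigma_mem hT hvT (lt_of_le_of_lt h7 h8)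
  obtain ⟨hσT, hσ1, hσ2⟩ := tsSigma_mem hT hvT h8
  exact hf ⟨le_trans hu'.1 hσ'1, le_trans hσ'2 hvIcc.2⟩
    ⟨le_trans huIcc.1 hσ1, le_trans hσ2 hvIcc.2⟩
    (tsSigma_mono hvT h8 h7)

/-- Refinement decreases upper delta sums. -/
lemma upperSumD_refine (P R : TSPartition T a b) (φ : ℕ → ℕ)
    (hφ : ∀ j < P.n, φ j < φ (j + 1)) (hφn : ∀ j ≤ P.n, φ j ≤ R.n)
    (h0 : φ 0 = 0) (hn : φ P.n = R.n) (hpt : ∀ j ≤ P.n, P.t j = R.t (φ j)) :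
    upperSumD T f g R ≤ upperSumD T f g P := by
  rw [upperSumD_eq hT hf, upperSumD_eq hT hf]
  refine wSum_refine_le hg (w := fun _ v => f (tsRho T v)) ?_ R P φ hφ hφn h0 hn hpt
  intro u v u' v' hu'T huT hvT hv'T hu' hv' h7 h8 h9
  have huIcc : u ∈ Set.Icc a b := ⟨le_trans hu'.1 h7, le_trans (le_trans h8.le h9) hv'.2⟩
  obtain ⟨hρT, hρ1, hρ2⟩ := tsRho_mem hT huT h8
  obtain ⟨hρ'T, hρ'1, hρ'2⟩ := tsRho_mem hT huT (lt_of_lt_of_le h8 h9)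
  exact hf ⟨le_trans huIcc.1 hρ1, le_trans (le_trans hρ2 h9) hv'.2⟩
    ⟨le_trans huIcc.1 hρ'1, le_trans hρ'2 hv'.2⟩
    (tsRho_mono huT h8 h9)

lemma upperSumN_refine (P R : TSPartition T a b) (φ : ℕ → ℕ)
    (hφ : ∀ j < P.n, φ j < φ (j + 1)) (hφn : ∀ j ≤ P.n, φ j ≤ R.n)
    (h0 : φ 0 = 0) (hn : φ P.n = R.n) (hpt : ∀ j ≤ P.n, P.t j = R.t (φ j)) :
    upperSumN T f g R ≤ upperSumN T f g P := by
  rw [upperSumN_eq hT hf, upperSumN_eq hT hf]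
  refine wSum_refine_le hg (w := fun _ v => f v) ?_ R P φ hφ hφn h0 hn hpt
  intro u v u' v' hu'T huT hvT hv'T hu' hv' h7 h8 h9
  exact hf ⟨le_trans (le_trans hu'.1 h7) h8.le, le_trans h9 hv'.2⟩ hv' h9

/-- Cross inequality: every lower delta sum is at most every upper delta sum. -/
lemma crossD (P P' : TSPartition T a b) :
    lowerSumD T f g P ≤ upperSumD T f g P' := by
  obtain ⟨R, ⟨φ, hφ1, hφ2, hφ3, hφ4, hφ5⟩, ⟨ψ, hψ1, hψ2, hψ3, hψ4, hψ5⟩⟩ :=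
    TSPartition.exists_common_refinement hab P P'
  calc lowerSumD T f g P ≤ lowerSumD T f g R :=
        lowerSumD_refine hT hab hf hg P R φ hφ1 hφ2 hφ3 hφ4 hφ5
  _ ≤ upperSumD T f g R := lowerSumD_le_upperSumD hT hab hf hg R
  _ ≤ upperSumD T f g P' := upperSumD_refine hT hab hf hg P' R ψ hψ1 hψ2 hψ3 hψ4 hψ5

lemma crossN (P P' : TSPartition T a b) :
    lowerSumN T f g P ≤ upperSumN T f g P' := by
  obtain ⟨R, ⟨φ, hφ1, hφ2, hφ3, hφ4, hφ5⟩, ⟨ψ, hψ1, hψ2, hψ3, hψ4, hψ5⟩⟩ :=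
    TSPartition.exists_common_refinement hab P P'
  calc lowerSumN T f g P ≤ lowerSumN T f g R :=
        lowerSumN_refine hT hab hf hg P R φ hφ1 hφ2 hφ3 hφ4 hφ5
  _ ≤ upperSumN T f g R := lowerSumN_le_upperSumN hT hab hf hg R
  _ ≤ upperSumN T f g P' := upperSumN_refine hT hab hf hg P' R ψ hψ1 hψ2 hψ3 hψ4 hψ5

end Bounds

end Integrals
/-- Comparison of the delta and nabla Riemann–Stieltjes integrals of the restrictions
with the classical Riemann–Stieltjes integral (here realized as the Darboux–Stieltjes
integral over the time scale `Set.univ`), for strictly increasing `f`. -/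
theorem statement8 (T : Set ℝ) (hT : IsClosed T) (hTne : T.Nonempty)
    (a b : ℝ) (ha : a ∈ T) (hb : b ∈ T) (hab : a < b) (f g : ℝ → ℝ)
    (hg : StrictMonoOn g (Set.Icc a b))
    (hf : StrictMonoOn f (Set.Icc a b))
    (hclass : RSDeltaIntegrable Set.univ a b f g) :
    RSDeltaIntegrable T a b f g ∧ RSNablaIntegrable T a b f g ∧
    RSDeltaIntegral T a b f g ≤ RSDeltaIntegral Set.univ a b f g ∧
    RSDeltaIntegral Set.univ a b f g ≤ RSNablaIntegral T a b f g := by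
  have hf' : MonotoneOn f (Set.Icc a b) := hf.monotoneOn
  have hg' : MonotoneOn g (Set.Icc a b) := hg.monotoneOn
  have hau : a ∈ (Set.univ : Set ℝ) := trivial
  have hbu : b ∈ (Set.univ : Set ℝ) := trivial
  have hclass' : lowerIntD Set.univ a b f g = upperIntD Set.univ a b f g := hclass
  -- classical ε-partitions from integrability on `univ`
  have hsmall : ∀ ε : ℝ, 0 < ε → ∃ Q : TSPartition Set.univ a b,
      upperSumD Set.univ f g Q - lowerSumD Set.univ f g Q < ε := by
    intro ε hε
    have hneL : (Set.range fun P : TSPartition Set.univ a b =>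
        lowerSumD Set.univ f g P).Nonempty := ⟨_, ⟨TSPartition.two hau hbu hab, rfl⟩⟩
    have hneU : (Set.range fun P : TSPartition Set.univ a b =>
        upperSumD Set.univ f g P).Nonempty := ⟨_, ⟨TSPartition.two hau hbu hab, rfl⟩⟩
    obtain ⟨x, hxmem, hx⟩ := exists_lt_of_lt_csSup hneL
      (show lowerIntD Set.univ a b f g - ε / 2 < sSup (Set.range fun P :
        TSPartition Set.univ a b => lowerSumD Set.univ f g P) from
        sub_lt_self _ (half_pos hε))
    obtain ⟨Q1, rfl⟩ := hxmem
    obtain ⟨y, hymem, hy⟩ := exists_lt_of_csInf_lt hneU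
      (show sInf (Set.range fun P : TSPartition Set.univ a b =>
        upperSumD Set.univ f g P) < upperIntD Set.univ a b f g + ε / 2 from
        lt_add_of_pos_right _ (half_pos hε))
    obtain ⟨Q2, rfl⟩ := hymem
    obtain ⟨R, ⟨φ, hφ1, hφ2, hφ3, hφ4, hφ5⟩, ⟨ψ, hψ1, hψ2, hψ3, hψ4, hψ5⟩⟩ :=
      TSPartition.exists_common_refinement hab Q1 Q2
    have hd1 : lowerSumD Set.univ f g Q1 ≤ lowerSumD Set.univ f g R :=
      lowerSumD_refine isClosed_univ hab hf' hg' Q1 R φ hφ1 hφ2 hφ3 hφ4 hφ5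
    have hd2 : upperSumD Set.univ f g R ≤ upperSumD Set.univ f g Q2 :=
      upperSumD_refine isClosed_univ hab hf' hg' Q2 R ψ hψ1 hψ2 hψ3 hψ4 hψ5
    exact ⟨R, by linarith⟩
  -- delta integrability on T
  have hTled : lowerIntD T a b f g ≤ upperIntD T a b f g := by
    apply csSup_le
    · exact ⟨_, Set.mem_range_self (TSPartition.two ha hb hab)⟩
    rintro x ⟨P, rfl⟩
    apply le_csInf
    · exact ⟨_, Set.mem_range_self (TSPartition.two ha hb hab)⟩
    rintro y ⟨P', rfl⟩
    exact crossD hT hab hf' hg' P P'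
  have hTged : upperIntD T a b f g ≤ lowerIntD T a b f g := by
    apply le_of_forall_pos_le_add
    intro ε hε
    obtain ⟨Q, hQ⟩ := hsmall ε hε
    obtain ⟨P, hPd, _⟩ := exists_transfer hT ha hb hab hf' hg' Q
    have h1 : upperIntD T a b f g ≤ upperSumD T f g P :=
      csInf_le (bddBelow_upperD hT hab hf' hg') ⟨P, rfl⟩
    have h2 : lowerSumD T f g P ≤ lowerIntD T a b f g :=
      le_csSup (bddAbove_lowerD hT hab hf' hg') ⟨P, rfl⟩
    linarith
  have hTintD : RSDeltaIntegrable T a b f g := le_antisymm hTled hTged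
  -- nabla integrability on T
  have hTlen : lowerIntN T a b f g ≤ upperIntN T a b f g := by
    apply csSup_le
    · exact ⟨_, Set.mem_range_self (TSPartition.two ha hb hab)⟩
    rintro x ⟨P, rfl⟩
    apply le_csInf
    · exact ⟨_, Set.mem_range_self (TSPartition.two ha hb hab)⟩
    rintro y ⟨P', rfl⟩
    exact crossN hT hab hf' hg' P P'
  have hTgen : upperIntN T a b f g ≤ lowerIntN T a b f g := by
    apply le_of_forall_pos_le_add
    intro ε hε
    obtain ⟨Q, hQ⟩ := hsmall ε hε
    obtain ⟨P, _, hPn⟩ := exists_transfer hT ha hb hab hf' hg' Q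
    have h1 : upperIntN T a b f g ≤ upperSumN T f g P :=
      csInf_le (bddBelow_upperN hT hab hf' hg') ⟨P, rfl⟩
    have h2 : lowerSumN T f g P ≤ lowerIntN T a b f g :=
      le_csSup (bddAbove_lowerN hT hab hf' hg') ⟨P, rfl⟩
    linarith
  have hTintN : RSNablaIntegrable T a b f g := le_antisymm hTlen hTgen
  refine ⟨hTintD, hTintN, ?_, ?_⟩
  · -- ∫Δ over T ≤ classical integral
    show upperIntD T a b f g ≤ upperIntD Set.univ a b f g
    have hTintD' : lowerIntD T a b f g = upperIntD T a b f g := hTintD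
    rw [← hTintD', ← hclass']
    apply csSup_le
    · exact ⟨_, Set.mem_range_self (TSPartition.two ha hb hab)⟩
    rintro x ⟨P, rfl⟩
    dsimp only
    have heq : lowerSumD T f g P = lowerSumD Set.univ f g P.relax := by
      rw [lowerSumD_eq hT hf', lowerSumD_eq isClosed_univ hf']
      rfl
    rw [heq]
    exact le_csSup (bddAbove_lowerD isClosed_univ hab hf' hg') ⟨P.relax, rfl⟩
  · -- classical integral ≤ ∫∇ over T
    show upperIntD Set.univ a b f g ≤ upperIntN T a b f g
    apply le_csInf
    · exact ⟨_, Set.mem_range_self (TSPartition.two ha hb hab)⟩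
    rintro x ⟨P, rfl⟩
    dsimp only
    have heq : upperSumN T f g P = upperSumD Set.univ f g P.relax := by
      rw [upperSumN_eq hT hf', upperSumD_eq isClosed_univ hf']
      simp [wSum, tsRho_univ]
      rfl
    rw [heq]
    exact csInf_le (bddBelow_upperD isClosed_univ hab hf' hg') ⟨P.relax, rfl⟩
end
end

section
/- (Additivity over subintervals) Let a, b, c ∈ 𝕋 with a < b < c. If f is bounded on [a,c] ∩ 𝕋 and g is increasing on [a,c] ∩ 𝕋, and f is Riemann–Stieltjes delta integrable with respect to g on [a,b]∩𝕋 and on [b,c]∩𝕋, then f is integrable on [a,c]∩𝕋 and ∫ₐᶜ f Δg = ∫ₐᵇ f Δg + ∫_b^c f Δg. -/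
open Set Filter

noncomputable section

namespace RSAux

variable {T : Set ℝ}

lemma le_tsRho {s t : ℝ} (hs : s ∈ T) (hst : s < t) : s ≤ tsRho T t :=
  le_csSup ⟨t, fun _ hx => hx.2.le⟩ ⟨hs, hst⟩

lemma tsRho_le {s t : ℝ} (hs : s ∈ T) (hst : s < t) : tsRho T t ≤ t :=
  csSup_le ⟨s, hs, hst⟩ fun _ hx => hx.2.le

lemma tsRho_mono {s t u : ℝ} (hs : s ∈ T) (hst : s < t) (htu : t ≤ u) :
    tsRho T t ≤ tsRho T u :=
  csSup_le_csSup ⟨u, fun _ hx => hx.2.le⟩ ⟨s, hs, hst⟩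
    (fun x hx => ⟨hx.1, lt_of_lt_of_le hx.2 htu⟩)

lemma part_mono {a b : ℝ} (P : TSPartition T a b) {i j : ℕ} (hij : i ≤ j) (hj : j ≤ P.n) :
    P.t i ≤ P.t j := by
  induction j with
  | zero => simp [Nat.le_zero.mp hij]
  | succ j ih =>
    rcases Nat.lt_or_ge i (j + 1) with h | h
    · exact (ih (Nat.lt_succ_iff.mp h) (le_trans (Nat.le_succ j) hj)).trans
        (P.mono j (Nat.lt_of_succ_le hj)).le
    · have : i = j + 1 := le_antisymm hij h
      simp [this]

lemma part_mem_Icc {a b : ℝ} (P : TSPartition T a b) {j : ℕ} (hj : j ≤ P.n) :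
    P.t j ∈ Set.Icc a b := by
  constructor
  · have := part_mono P (Nat.zero_le j) hj; rwa [P.first] at this
  · have := part_mono P hj le_rfl; rwa [P.last] at this

/-- Facts about the `j`-th subinterval set of a partition of `[x,y] ⊆ [a,c]`. -/
lemma Sj_facts {a c x y : ℝ} (hax : a ≤ x) (hyc : y ≤ c)
    (P : TSPartition T x y) {j : ℕ} (hj : j < P.n) :
    (Set.Icc (P.t j) (tsRho T (P.t (j + 1))) ∩ T).Nonempty ∧
    Set.Icc (P.t j) (tsRho T (P.t (j + 1))) ∩ T ⊆ Set.Icc a c ∩ T ∧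
    P.t j ∈ Set.Icc a c ∩ T ∧ P.t (j + 1) ∈ Set.Icc a c ∩ T := by
  have hjn : j ≤ P.n := hj.le
  have hj1n : j + 1 ≤ P.n := hj
  have htj : P.t j ∈ T := P.mem j hjn
  have htj1 : P.t (j + 1) ∈ T := P.mem (j + 1) hj1n
  have hlt : P.t j < P.t (j + 1) := P.mono j hj
  have hIj := part_mem_Icc P hjn
  have hIj1 := part_mem_Icc P hj1n
  have hmemj : P.t j ∈ Set.Icc a c ∩ T :=
    ⟨⟨hax.trans hIj.1, hIj.2.trans hyc⟩, htj⟩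
  have hmemj1 : P.t (j + 1) ∈ Set.Icc a c ∩ T :=
    ⟨⟨hax.trans hIj1.1, hIj1.2.trans hyc⟩, htj1⟩
  refine ⟨⟨P.t j, ⟨le_rfl, le_tsRho htj hlt⟩, htj⟩, fun s hs => ?_, hmemj, hmemj1⟩
  exact ⟨⟨hmemj.1.1.trans hs.1.1,
    (hs.1.2.trans ((tsRho_le htj hlt).trans hmemj1.1.2))⟩, hs.2⟩

lemma bounds_of_subset {a c C : ℝ} {f : ℝ → ℝ} {A : Set ℝ}
    (hf : ∀ t ∈ Set.Icc a c ∩ T, |f t| ≤ C)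
    (hne : A.Nonempty) (hsub : A ⊆ Set.Icc a c ∩ T) :
    -C ≤ sInf (f '' A) ∧ sInf (f '' A) ≤ C ∧ -C ≤ sSup (f '' A) ∧ sSup (f '' A) ≤ C := by
  have himg : (f '' A).Nonempty := hne.image f
  have hub : ∀ y ∈ f '' A, y ≤ C := by
    rintro y ⟨x, hx, rfl⟩; exact (abs_le.1 (hf x (hsub hx))).2
  have hlb : ∀ y ∈ f '' A, -C ≤ y := by
    rintro y ⟨x, hx, rfl⟩; exact (abs_le.1 (hf x (hsub hx))).1
  obtain ⟨y, hy⟩ := himg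
  refine ⟨le_csInf ⟨y, hy⟩ hlb, (csInf_le ⟨-C, hlb⟩ hy).trans (hub y hy),
    (hlb y hy).trans (le_csSup ⟨C, hub⟩ hy), csSup_le ⟨y, hy⟩ hub⟩

lemma sSup_image_mono {f : ℝ → ℝ} {A B : Set ℝ} (hne : A.Nonempty) (hAB : A ⊆ B)
    (hB : BddAbove (f '' B)) : sSup (f '' A) ≤ sSup (f '' B) :=
  csSup_le_csSup hB (hne.image f) (Set.image_mono (f := f) hAB)

lemma sInf_image_mono {f : ℝ → ℝ} {A B : Set ℝ} (hne : A.Nonempty) (hAB : A ⊆ B)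
    (hB : BddBelow (f '' B)) : sInf (f '' B) ≤ sInf (f '' A) :=
  csInf_le_csInf hB (hne.image f) (Set.image_mono (f := f) hAB)

section SumBounds

variable {a c x y C : ℝ} {f g : ℝ → ℝ}

lemma upperSumD_ge (hax : a ≤ x) (hyc : y ≤ c)
    (hf : ∀ t ∈ Set.Icc a c ∩ T, |f t| ≤ C) (hg : MonotoneOn g (Set.Icc a c ∩ T))
    (P : TSPartition T x y) : -(C * (g y - g x)) ≤ upperSumD T f g P := by
  have key : ∀ j ∈ Finset.range P.n,
      -C * (g (P.t (j + 1)) - g (P.t j)) ≤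
      sSup (f '' (Set.Icc (P.t j) (tsRho T (P.t (j + 1))) ∩ T)) * (g (P.t (j + 1)) - g (P.t j)) := by
    intro j hj
    rw [Finset.mem_range] at hj
    obtain ⟨hne, hsub, hmj, hmj1⟩ := Sj_facts hax hyc P hj
    have hb := bounds_of_subset hf hne hsub
    have hdg : 0 ≤ g (P.t (j + 1)) - g (P.t j) :=
      sub_nonneg.2 (hg hmj hmj1 (P.mono j hj).le)
    exact mul_le_mul_of_nonneg_right hb.2.2.1 hdg
  calc -(C * (g y - g x))
      = ∑ j ∈ Finset.range P.n, -C * (g (P.t (j + 1)) - g (P.t j)) := by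
        rw [← Finset.mul_sum, Finset.sum_range_sub (fun i => g (P.t i)), P.first, P.last]; ring
    _ ≤ upperSumD T f g P := Finset.sum_le_sum key

lemma lowerSumD_le (hax : a ≤ x) (hyc : y ≤ c)
    (hf : ∀ t ∈ Set.Icc a c ∩ T, |f t| ≤ C) (hg : MonotoneOn g (Set.Icc a c ∩ T))
    (P : TSPartition T x y) : lowerSumD T f g P ≤ C * (g y - g x) := by
  have key : ∀ j ∈ Finset.range P.n,
      sInf (f '' (Set.Icc (P.t j) (tsRho T (P.t (j + 1))) ∩ T)) * (g (P.t (j + 1)) - g (P.t j)) ≤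
      C * (g (P.t (j + 1)) - g (P.t j)) := by
    intro j hj
    rw [Finset.mem_range] at hj
    obtain ⟨hne, hsub, hmj, hmj1⟩ := Sj_facts hax hyc P hj
    have hb := bounds_of_subset hf hne hsub
    have hdg : 0 ≤ g (P.t (j + 1)) - g (P.t j) :=
      sub_nonneg.2 (hg hmj hmj1 (P.mono j hj).le)
    exact mul_le_mul_of_nonneg_right hb.2.1 hdg
  calc lowerSumD T f g P ≤ ∑ j ∈ Finset.range P.n, C * (g (P.t (j + 1)) - g (P.t j)) :=
        Finset.sum_le_sum key
    _ = C * (g y - g x) := by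
        rw [← Finset.mul_sum, Finset.sum_range_sub (fun i => g (P.t i)), P.first, P.last]

end SumBounds

/-- The trivial one-interval partition. -/
def trivP {a b : ℝ} (ha : a ∈ T) (hb : b ∈ T) (hab : a < b) : TSPartition T a b where
  n := 1
  t := fun j => if j = 0 then a else b
  npos := one_pos
  mem := by
    intro j _
    by_cases h : j = 0 <;> simp [h, ha, hb]
  first := by simp
  last := by simp
  mono := by
    intro j hj
    have : j = 0 := by omega
    simp [this, hab]

/-- Concatenation of partitions of `[a,b]` and `[b,c]`. -/
def joinP {a b c : ℝ} (P1 : TSPartition T a b) (P2 : TSPartition T b c) :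
    TSPartition T a c where
  n := P1.n + P2.n
  t := fun j => if j < P1.n then P1.t j else P2.t (j - P1.n)
  npos := Nat.add_pos_left P1.npos _
  mem := by
    intro j hj
    by_cases h : j < P1.n
    · simpa [h] using P1.mem j h.le
    · simpa [h] using P2.mem (j - P1.n) (by omega)
  first := by simp [P1.npos, P1.first]
  last := by
    have h : ¬ (P1.n + P2.n < P1.n) := by omega
    simp [h, P2.last]
  mono := by
    intro j hj
    rcases Nat.lt_or_ge (j + 1) P1.n with h | h
    · simp only [if_pos (by omega : j < P1.n), if_pos h]
      exact P1.mono j (by omega)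
    · rcases Nat.lt_or_ge j P1.n with h2 | h2
      ·
        have hj1 : j + 1 = P1.n := by omega
        simp only [if_pos h2, if_neg (by omega : ¬ j + 1 < P1.n)]
        have hbb : P2.t (j + 1 - P1.n) = b := by
          rw [hj1]; simpa using P2.first
        rw [hbb]
        have hlt : P1.t j < P1.t (j + 1) := P1.mono j (by omega)
        rwa [hj1, P1.last] at hlt
      · simp only [if_neg (by omega : ¬ j < P1.n), if_neg (by omega : ¬ j + 1 < P1.n)]
        have h3 : j + 1 - P1.n = (j - P1.n) + 1 := by omega
        rw [h3]
        exact P2.mono (j - P1.n) (by omega)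

lemma joinP_t₁ {a b c : ℝ} (P1 : TSPartition T a b) (P2 : TSPartition T b c)
    {j : ℕ} (hj : j ≤ P1.n) : (joinP P1 P2).t j = P1.t j := by
  rcases Nat.lt_or_ge j P1.n with h | h
  · simp [joinP, h]
  · have hj' : j = P1.n := by omega
    simp only [joinP, if_neg (by omega : ¬ j < P1.n), hj']
    simpa [P1.last] using P2.first

lemma joinP_t₂ {a b c : ℝ} (P1 : TSPartition T a b) (P2 : TSPartition T b c)
    (j : ℕ) : (joinP P1 P2).t (P1.n + j) = P2.t j := by
  rcases Nat.eq_zero_or_pos j with h0 | h0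
  · subst h0
    rw [Nat.add_zero, joinP_t₁ P1 P2 le_rfl, P1.last]
    exact P2.first.symm
  · simp only [joinP, if_neg (by omega : ¬ P1.n + j < P1.n)]
    congr 1
    omega

lemma upperSumD_joinP {a b c : ℝ} {f g : ℝ → ℝ} (P1 : TSPartition T a b)
    (P2 : TSPartition T b c) :
    upperSumD T f g (joinP P1 P2) = upperSumD T f g P1 + upperSumD T f g P2 := by
  unfold upperSumD
  have hn : (joinP P1 P2).n = P1.n + P2.n := rfl
  rw [hn, Finset.sum_range_add]
  congr 1
  · refine Finset.sum_congr rfl fun j hj => ?_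
    rw [Finset.mem_range] at hj
    rw [joinP_t₁ P1 P2 hj.le, joinP_t₁ P1 P2 (by omega : j + 1 ≤ P1.n)]
  · refine Finset.sum_congr rfl fun j hj => ?_
    have e2 : (joinP P1 P2).t (P1.n + j + 1) = P2.t (j + 1) := by
      rw [Nat.add_assoc]; exact joinP_t₂ P1 P2 (j + 1)
    rw [e2, joinP_t₂ P1 P2 j]

lemma lowerSumD_joinP {a b c : ℝ} {f g : ℝ → ℝ} (P1 : TSPartition T a b)
    (P2 : TSPartition T b c) :
    lowerSumD T f g (joinP P1 P2) = lowerSumD T f g P1 + lowerSumD T f g P2 := by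
  unfold lowerSumD
  have hn : (joinP P1 P2).n = P1.n + P2.n := rfl
  rw [hn, Finset.sum_range_add]
  congr 1
  · refine Finset.sum_congr rfl fun j hj => ?_
    rw [Finset.mem_range] at hj
    rw [joinP_t₁ P1 P2 hj.le, joinP_t₁ P1 P2 (by omega : j + 1 ≤ P1.n)]
  · refine Finset.sum_congr rfl fun j hj => ?_
    have e2 : (joinP P1 P2).t (P1.n + j + 1) = P2.t (j + 1) := by
      rw [Nat.add_assoc]; exact joinP_t₂ P1 P2 (j + 1)
    rw [e2, joinP_t₂ P1 P2 j]

section Split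

variable {a b c : ℝ}

/-- First half of a partition of `[a,c]` split strictly below `b`. -/
def splitP1 {a c : ℝ} (Q : TSPartition T a c) {b : ℝ} {k : ℕ} (hb : b ∈ T)
    (hk : Q.t k < b) (hkn : k < Q.n) : TSPartition T a b where
  n := k + 1
  t := fun j => if j ≤ k then Q.t j else b
  npos := k.succ_pos
  mem := by
    intro j _
    by_cases h : j ≤ k
    · simpa [h] using Q.mem j (by omega)
    · simpa [h] using hb
  first := by simp [Q.first]
  last := by simp
  mono := by
    intro j hj
    rw [if_pos (by omega : j ≤ k)]
    by_cases h : j + 1 ≤ k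
    · rw [if_pos h]
      exact Q.mono j (by omega)
    · rw [if_neg h]
      have hjk : j = k := by omega
      rw [hjk]
      exact hk

/-- Second half of a partition of `[a,c]` split strictly above `b`. -/
def splitP2 {a c : ℝ} (Q : TSPartition T a c) {b : ℝ} {k : ℕ} (hb : b ∈ T)
    (hbk1 : b < Q.t (k + 1)) (hkn : k < Q.n) : TSPartition T b c where
  n := Q.n - k
  t := fun j => if j = 0 then b else Q.t (j + k)
  npos := by omega
  mem := by
    intro j hj
    by_cases h : j = 0
    · simpa [h] using hb
    · simpa [h] using Q.mem (j + k) (by omega)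
  first := by simp
  last := by
    rw [if_neg (by omega), show Q.n - k + k = Q.n by omega, Q.last]
  mono := by
    intro j hj
    by_cases h : j = 0
    · subst h
      rw [if_pos rfl, if_neg (by omega), show 1 + k = k + 1 by omega]
      exact hbk1
    · rw [if_neg h, if_neg (by omega)]
      have h2 := Q.mono (j + k) (by omega)
      rwa [show j + 1 + k = j + k + 1 by omega]

lemma split_sum_eq {a c b : ℝ} (Q : TSPartition T a c) {k : ℕ} (hb : b ∈ T)
    (hk : Q.t k < b) (hbk1 : b < Q.t (k + 1)) (hkn : k < Q.n) (F : ℝ → ℝ → ℝ) :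
    (∑ j ∈ Finset.range (splitP1 Q hb hk hkn).n,
        F ((splitP1 Q hb hk hkn).t j) ((splitP1 Q hb hk hkn).t (j + 1)))
      + ∑ j ∈ Finset.range (splitP2 Q hb hbk1 hkn).n,
        F ((splitP2 Q hb hbk1 hkn).t j) ((splitP2 Q hb hbk1 hkn).t (j + 1))
    = (∑ j ∈ Finset.range Q.n, F (Q.t j) (Q.t (j + 1)))
      - F (Q.t k) (Q.t (k + 1)) + F (Q.t k) b + F b (Q.t (k + 1)) := by
  have hn1 : (splitP1 Q hb hk hkn).n = k + 1 := rfl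
  have hn2 : (splitP2 Q hb hbk1 hkn).n = Q.n - k := rfl
  have ht1 : ∀ j, (splitP1 Q hb hk hkn).t j = if j ≤ k then Q.t j else b := fun _ => rfl
  have ht2 : ∀ j, (splitP2 Q hb hbk1 hkn).t j = if j = 0 then b else Q.t (j + k) :=
    fun _ => rfl
  have S1 : (∑ j ∈ Finset.range (splitP1 Q hb hk hkn).n,
      F ((splitP1 Q hb hk hkn).t j) ((splitP1 Q hb hk hkn).t (j + 1)))
      = (∑ j ∈ Finset.range k, F (Q.t j) (Q.t (j + 1))) + F (Q.t k) b := by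
    rw [hn1, Finset.sum_range_succ]
    congr 1
    · refine Finset.sum_congr rfl fun j hj => ?_
      rw [Finset.mem_range] at hj
      rw [ht1 j, ht1 (j + 1), if_pos (by omega : j ≤ k), if_pos (by omega : j + 1 ≤ k)]
    · rw [ht1 k, ht1 (k + 1), if_pos le_rfl, if_neg (by omega)]
  have S2 : (∑ j ∈ Finset.range (splitP2 Q hb hbk1 hkn).n,
      F ((splitP2 Q hb hbk1 hkn).t j) ((splitP2 Q hb hbk1 hkn).t (j + 1)))
      = (∑ i ∈ Finset.range (Q.n - (k + 1)), F (Q.t (k + 1 + i)) (Q.t (k + 1 + i + 1)))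
        + F b (Q.t (k + 1)) := by
    rw [hn2, show Q.n - k = (Q.n - (k + 1)) + 1 by omega, Finset.sum_range_succ']
    congr 1
    · refine Finset.sum_congr rfl fun i _ => ?_
      rw [ht2 (i + 1), ht2 (i + 1 + 1), if_neg (by omega), if_neg (by omega),
        show i + 1 + k = k + 1 + i by omega, show i + 1 + 1 + k = k + 1 + i + 1 by omega]
    · rw [ht2 0, ht2 (0 + 1), if_pos rfl, if_neg (by omega), show 0 + 1 + k = k + 1 by omega]
  have S3 : (∑ j ∈ Finset.range Q.n, F (Q.t j) (Q.t (j + 1)))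
      = ((∑ j ∈ Finset.range k, F (Q.t j) (Q.t (j + 1))) + F (Q.t k) (Q.t (k + 1)))
        + ∑ i ∈ Finset.range (Q.n - (k + 1)), F (Q.t (k + 1 + i)) (Q.t (k + 1 + i + 1)) := by
    conv_lhs => rw [show Q.n = (k + 1) + (Q.n - (k + 1)) by omega, Finset.sum_range_add,
      Finset.sum_range_succ]
  rw [S1, S2, S3]
  ring

/-- First half when `b` is already a partition point. -/
def splitE1 {a c : ℝ} (Q : TSPartition T a c) {b : ℝ} {k : ℕ}
    (hbe : Q.t (k + 1) = b) (hkn : k < Q.n) : TSPartition T a b where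
  n := k + 1
  t := Q.t
  npos := k.succ_pos
  mem := fun j hj => Q.mem j (by omega)
  first := Q.first
  last := hbe
  mono := fun j hj => Q.mono j (by omega)

/-- Second half when `b` is already a partition point. -/
def splitE2 {a c : ℝ} (Q : TSPartition T a c) {b : ℝ} {k : ℕ}
    (hbe : Q.t (k + 1) = b) (hk1n : k + 1 < Q.n) : TSPartition T b c where
  n := Q.n - (k + 1)
  t := fun j => Q.t (j + (k + 1))
  npos := by omega
  mem := fun j hj => Q.mem (j + (k + 1)) (by omega)
  first := by simpa using hbe
  last := by
    rw [show Q.n - (k + 1) + (k + 1) = Q.n by omega, Q.last]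
  mono := by
    intro j hj
    have h2 := Q.mono (j + (k + 1)) (by omega)
    rwa [show j + 1 + (k + 1) = j + (k + 1) + 1 by omega]

lemma splitE_sum_eq {a c b : ℝ} (Q : TSPartition T a c) {k : ℕ}
    (hbe : Q.t (k + 1) = b) (hkn : k < Q.n) (hk1n : k + 1 < Q.n) (F : ℝ → ℝ → ℝ) :
    (∑ j ∈ Finset.range (splitE1 Q hbe hkn).n,
        F ((splitE1 Q hbe hkn).t j) ((splitE1 Q hbe hkn).t (j + 1)))
      + ∑ j ∈ Finset.range (splitE2 Q hbe hk1n).n,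
        F ((splitE2 Q hbe hk1n).t j) ((splitE2 Q hbe hk1n).t (j + 1))
    = ∑ j ∈ Finset.range Q.n, F (Q.t j) (Q.t (j + 1)) := by
  have hn1 : (splitE1 Q hbe hkn).n = k + 1 := rfl
  have hn2 : (splitE2 Q hbe hk1n).n = Q.n - (k + 1) := rfl
  have ht1 : ∀ j, (splitE1 Q hbe hkn).t j = Q.t j := fun _ => rfl
  have ht2 : ∀ j, (splitE2 Q hbe hk1n).t j = Q.t (j + (k + 1)) := fun _ => rfl
  rw [hn1, hn2,
    show (∑ j ∈ Finset.range (Q.n - (k + 1)),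
        F ((splitE2 Q hbe hk1n).t j) ((splitE2 Q hbe hk1n).t (j + 1)))
      = ∑ j ∈ Finset.range (Q.n - (k + 1)), F (Q.t (k + 1 + j)) (Q.t (k + 1 + j + 1)) from
      Finset.sum_congr rfl fun j _ => by
        rw [ht2 j, ht2 (j + 1), show j + (k + 1) = k + 1 + j by omega,
          show j + 1 + (k + 1) = k + 1 + j + 1 by omega]]
  conv_rhs => rw [show Q.n = (k + 1) + (Q.n - (k + 1)) by omega, Finset.sum_range_add]
  rfl

end Split


section Middle

variable {a c C : ℝ} {f g : ℝ → ℝ}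

lemma middle_facts (hf : ∀ t ∈ Set.Icc a c ∩ T, |f t| ≤ C)
    (hg : MonotoneOn g (Set.Icc a c ∩ T))
    {u v m : ℝ} (hu : u ∈ T) (hm : m ∈ T) (hv : v ∈ T)
    (hum : u < m) (hmv : m < v) (hau : a ≤ u) (hvc : v ≤ c) :
    sSup (f '' (Set.Icc u (tsRho T m) ∩ T)) * (g m - g u)
      + sSup (f '' (Set.Icc m (tsRho T v) ∩ T)) * (g v - g m)
      ≤ sSup (f '' (Set.Icc u (tsRho T v) ∩ T)) * (g v - g u) ∧
    sInf (f '' (Set.Icc u (tsRho T v) ∩ T)) * (g v - g u)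
      ≤ sInf (f '' (Set.Icc u (tsRho T m) ∩ T)) * (g m - g u)
      + sInf (f '' (Set.Icc m (tsRho T v) ∩ T)) * (g v - g m) := by
  set A := Set.Icc u (tsRho T m) ∩ T with hA
  set B := Set.Icc m (tsRho T v) ∩ T with hB
  set Big := Set.Icc u (tsRho T v) ∩ T with hBig
  have hAne : A.Nonempty := ⟨u, ⟨le_rfl, le_tsRho hu hum⟩, hu⟩
  have hBne : B.Nonempty := ⟨m, ⟨le_rfl, le_tsRho hm hmv⟩, hm⟩
  have hAB : A ⊆ Big := fun x hx =>
    ⟨⟨hx.1.1, hx.1.2.trans (tsRho_mono hu hum hmv.le)⟩, hx.2⟩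
  have hBB : B ⊆ Big := fun x hx => ⟨⟨hum.le.trans hx.1.1, hx.1.2⟩, hx.2⟩
  have hBigsub : Big ⊆ Set.Icc a c ∩ T := fun x hx =>
    ⟨⟨hau.trans hx.1.1, (hx.1.2.trans (tsRho_le hm hmv)).trans hvc⟩, hx.2⟩
  have hub : ∀ y ∈ f '' Big, y ≤ C := by
    rintro y ⟨x, hx, rfl⟩; exact (abs_le.1 (hf x (hBigsub hx))).2
  have hlb : ∀ y ∈ f '' Big, -C ≤ y := by
    rintro y ⟨x, hx, rfl⟩; exact (abs_le.1 (hf x (hBigsub hx))).1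
  have hSA : sSup (f '' A) ≤ sSup (f '' Big) := sSup_image_mono hAne hAB ⟨C, hub⟩
  have hSB : sSup (f '' B) ≤ sSup (f '' Big) := sSup_image_mono hBne hBB ⟨C, hub⟩
  have hIA : sInf (f '' Big) ≤ sInf (f '' A) := sInf_image_mono hAne hAB ⟨-C, hlb⟩
  have hIB : sInf (f '' Big) ≤ sInf (f '' B) := sInf_image_mono hBne hBB ⟨-C, hlb⟩
  have hmemu : u ∈ Set.Icc a c ∩ T := ⟨⟨hau, (hum.trans hmv).le.trans hvc⟩, hu⟩
  have hmemm : m ∈ Set.Icc a c ∩ T := ⟨⟨hau.trans hum.le, hmv.le.trans hvc⟩, hm⟩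
  have hmemv : v ∈ Set.Icc a c ∩ T := ⟨⟨hau.trans (hum.trans hmv).le, hvc⟩, hv⟩
  have hd1 : 0 ≤ g m - g u := sub_nonneg.2 (hg hmemu hmemm hum.le)
  have hd2 : 0 ≤ g v - g m := sub_nonneg.2 (hg hmemm hmemv hmv.le)
  constructor
  · have h1 := mul_le_mul_of_nonneg_right hSA hd1
    have h2 := mul_le_mul_of_nonneg_right hSB hd2
    nlinarith [h1, h2]
  · have h1 := mul_le_mul_of_nonneg_right hIA hd1
    have h2 := mul_le_mul_of_nonneg_right hIB hd2
    nlinarith [h1, h2]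

/-- Splitting a partition of `[a,c]` at `b`. -/
lemma split_sums {b : ℝ} (hb : b ∈ T) (hab : a < b) (hbc : b < c)
    (hf : ∀ t ∈ Set.Icc a c ∩ T, |f t| ≤ C)
    (hg : MonotoneOn g (Set.Icc a c ∩ T)) (Q : TSPartition T a c) :
    ∃ (P1 : TSPartition T a b) (P2 : TSPartition T b c),
      upperSumD T f g P1 + upperSumD T f g P2 ≤ upperSumD T f g Q ∧
      lowerSumD T f g Q ≤ lowerSumD T f g P1 + lowerSumD T f g P2 := by
  classical
  set k := Nat.findGreatest (fun j => Q.t j < b) Q.n with hkdef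
  have hP0 : Q.t 0 < b := by rw [Q.first]; exact hab
  have hkb : Q.t k < b := by
    have h := Nat.findGreatest_spec (P := fun j => Q.t j < b) (Nat.zero_le Q.n) hP0
    simpa [← hkdef] using h
  have hkn : k ≤ Q.n := Nat.findGreatest_le Q.n
  have hkltn : k < Q.n := by
    rcases lt_or_eq_of_le hkn with h | h
    · exact h
    · exfalso; rw [h, Q.last] at hkb; linarith
  have hk1 : b ≤ Q.t (k + 1) := by
    by_contra h
    push_neg at h
    exact Nat.findGreatest_is_greatest (P := fun j => Q.t j < b)
      (by omega : Nat.findGreatest (fun j => Q.t j < b) Q.n < k + 1) hkltn h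
  have hIk := part_mem_Icc Q hkltn.le
  have hIk1 := part_mem_Icc Q hkltn
  rcases eq_or_lt_of_le hk1 with heq | hlt
  · -- b = Q.t (k+1)
    have hbe : Q.t (k + 1) = b := heq.symm
    have hk1n : k + 1 < Q.n := by
      rcases lt_or_eq_of_le (show k + 1 ≤ Q.n from hkltn) with h | h
      · exact h
      · exfalso; rw [h, Q.last] at hbe; linarith
    refine ⟨splitE1 Q hbe hkltn, splitE2 Q hbe hk1n, ?_, ?_⟩
    · exact le_of_eq (splitE_sum_eq Q hbe hkltn hk1n
        (fun u v => sSup (f '' (Set.Icc u (tsRho T v) ∩ T)) * (g v - g u)))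
    · exact le_of_eq (splitE_sum_eq Q hbe hkltn hk1n
        (fun u v => sInf (f '' (Set.Icc u (tsRho T v) ∩ T)) * (g v - g u))).symm
  · -- Q.t k < b < Q.t (k+1)
    have hmid := middle_facts hf hg (Q.mem k hkltn.le) hb (Q.mem (k + 1) hkltn)
      hkb hlt hIk.1 hIk1.2
    refine ⟨splitP1 Q hb hkb hkltn, splitP2 Q hb hlt hkltn, ?_, ?_⟩
    · have he := split_sum_eq Q hb hkb hlt hkltn
        (fun u v => sSup (f '' (Set.Icc u (tsRho T v) ∩ T)) * (g v - g u))
      have : upperSumD T f g (splitP1 Q hb hkb hkltn)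
          + upperSumD T f g (splitP2 Q hb hlt hkltn)
          = upperSumD T f g Q
            - sSup (f '' (Set.Icc (Q.t k) (tsRho T (Q.t (k + 1))) ∩ T))
              * (g (Q.t (k + 1)) - g (Q.t k))
            + sSup (f '' (Set.Icc (Q.t k) (tsRho T b) ∩ T)) * (g b - g (Q.t k))
            + sSup (f '' (Set.Icc b (tsRho T (Q.t (k + 1))) ∩ T))
              * (g (Q.t (k + 1)) - g b) := he
      rw [this]
      linarith [hmid.1]
    · have he := split_sum_eq Q hb hkb hlt hkltn
        (fun u v => sInf (f '' (Set.Icc u (tsRho T v) ∩ T)) * (g v - g u))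
      have : lowerSumD T f g (splitP1 Q hb hkb hkltn)
          + lowerSumD T f g (splitP2 Q hb hlt hkltn)
          = lowerSumD T f g Q
            - sInf (f '' (Set.Icc (Q.t k) (tsRho T (Q.t (k + 1))) ∩ T))
              * (g (Q.t (k + 1)) - g (Q.t k))
            + sInf (f '' (Set.Icc (Q.t k) (tsRho T b) ∩ T)) * (g b - g (Q.t k))
            + sInf (f '' (Set.Icc b (tsRho T (Q.t (k + 1))) ∩ T))
              * (g (Q.t (k + 1)) - g b) := he
      rw [this]
      linarith [hmid.2]

end Middle

end RSAux
/-- Additivity of the Riemann–Stieltjes delta integral over subintervals. -/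
theorem statement17 (T : Set ℝ) (hT : IsClosed T) (a b c : ℝ)
    (ha : a ∈ T) (hb : b ∈ T) (hc : c ∈ T) (hab : a < b) (hbc : b < c)
    (f g : ℝ → ℝ) (C : ℝ)
    (hf : ∀ t ∈ Set.Icc a c ∩ T, |f t| ≤ C)
    (hg : MonotoneOn g (Set.Icc a c ∩ T))
    (h₁ : RSDeltaIntegrable T a b f g) (h₂ : RSDeltaIntegrable T b c f g) :
    RSDeltaIntegrable T a c f g ∧
    RSDeltaIntegral T a c f g = RSDeltaIntegral T a b f g + RSDeltaIntegral T b c f g := by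
  classical
  have hac : a < c := hab.trans hbc
  -- nonemptiness of ranges
  have hneU_ab : (Set.range fun P : TSPartition T a b => upperSumD T f g P).Nonempty :=
    ⟨_, Set.mem_range_self (RSAux.trivP ha hb hab)⟩
  have hneU_bc : (Set.range fun P : TSPartition T b c => upperSumD T f g P).Nonempty :=
    ⟨_, Set.mem_range_self (RSAux.trivP hb hc hbc)⟩
  have hneU_ac : (Set.range fun P : TSPartition T a c => upperSumD T f g P).Nonempty :=
    ⟨_, Set.mem_range_self (RSAux.trivP ha hc hac)⟩
  have hneL_ab : (Set.range fun P : TSPartition T a b => lowerSumD T f g P).Nonempty :=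
    ⟨_, Set.mem_range_self (RSAux.trivP ha hb hab)⟩
  have hneL_bc : (Set.range fun P : TSPartition T b c => lowerSumD T f g P).Nonempty :=
    ⟨_, Set.mem_range_self (RSAux.trivP hb hc hbc)⟩
  have hneL_ac : (Set.range fun P : TSPartition T a c => lowerSumD T f g P).Nonempty :=
    ⟨_, Set.mem_range_self (RSAux.trivP ha hc hac)⟩
  -- boundedness of ranges
  have hbdU_ab : BddBelow (Set.range fun P : TSPartition T a b => upperSumD T f g P) :=
    ⟨-(C * (g b - g a)), by
      rintro x ⟨P, rfl⟩; exact RSAux.upperSumD_ge le_rfl hbc.le hf hg P⟩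
  have hbdU_bc : BddBelow (Set.range fun P : TSPartition T b c => upperSumD T f g P) :=
    ⟨-(C * (g c - g b)), by
      rintro x ⟨P, rfl⟩; exact RSAux.upperSumD_ge hab.le le_rfl hf hg P⟩
  have hbdU_ac : BddBelow (Set.range fun P : TSPartition T a c => upperSumD T f g P) :=
    ⟨-(C * (g c - g a)), by
      rintro x ⟨P, rfl⟩; exact RSAux.upperSumD_ge le_rfl le_rfl hf hg P⟩
  have hbdL_ab : BddAbove (Set.range fun P : TSPartition T a b => lowerSumD T f g P) :=
    ⟨C * (g b - g a), by
      rintro x ⟨P, rfl⟩; exact RSAux.lowerSumD_le le_rfl hbc.le hf hg P⟩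
  have hbdL_bc : BddAbove (Set.range fun P : TSPartition T b c => lowerSumD T f g P) :=
    ⟨C * (g c - g b), by
      rintro x ⟨P, rfl⟩; exact RSAux.lowerSumD_le hab.le le_rfl hf hg P⟩
  have hbdL_ac : BddAbove (Set.range fun P : TSPartition T a c => lowerSumD T f g P) :=
    ⟨C * (g c - g a), by
      rintro x ⟨P, rfl⟩; exact RSAux.lowerSumD_le le_rfl le_rfl hf hg P⟩
  -- (A) Uac ≤ Uab + Ubc
  have hA : upperIntD T a c f g ≤ upperIntD T a b f g + upperIntD T b c f g := by
    have step1 : ∀ P2 : TSPartition T b c,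
        upperIntD T a c f g - upperSumD T f g P2 ≤ upperIntD T a b f g := by
      intro P2
      apply le_csInf hneU_ab
      rintro x ⟨P1, rfl⟩
      have hj : upperIntD T a c f g ≤ upperSumD T f g P1 + upperSumD T f g P2 := by
        rw [← RSAux.upperSumD_joinP P1 P2]
        exact csInf_le hbdU_ac (Set.mem_range_self _)
      linarith
    have step2 : upperIntD T a c f g - upperIntD T a b f g ≤ upperIntD T b c f g := by
      apply le_csInf hneU_bc
      rintro x ⟨P2, rfl⟩
      linarith [step1 P2]
    linarith
  -- (B) Uab + Ubc ≤ Uac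
  have hB : upperIntD T a b f g + upperIntD T b c f g ≤ upperIntD T a c f g := by
    apply le_csInf hneU_ac
    rintro x ⟨Q, rfl⟩
    obtain ⟨P1, P2, h1, _⟩ := RSAux.split_sums hb hab hbc hf hg Q
    have e1 : upperIntD T a b f g ≤ upperSumD T f g P1 :=
      csInf_le hbdU_ab (Set.mem_range_self _)
    have e2 : upperIntD T b c f g ≤ upperSumD T f g P2 :=
      csInf_le hbdU_bc (Set.mem_range_self _)
    linarith
  -- (C) Lab + Lbc ≤ Lac
  have hCineq : lowerIntD T a b f g + lowerIntD T b c f g ≤ lowerIntD T a c f g := by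
    have step1 : ∀ P2 : TSPartition T b c,
        lowerIntD T a b f g ≤ lowerIntD T a c f g - lowerSumD T f g P2 := by
      intro P2
      apply csSup_le hneL_ab
      rintro x ⟨P1, rfl⟩
      have hj : lowerSumD T f g P1 + lowerSumD T f g P2 ≤ lowerIntD T a c f g := by
        rw [← RSAux.lowerSumD_joinP P1 P2]
        exact le_csSup hbdL_ac (Set.mem_range_self _)
      linarith
    have step2 : lowerIntD T b c f g ≤ lowerIntD T a c f g - lowerIntD T a b f g := by
      apply csSup_le hneL_bc
      rintro x ⟨P2, rfl⟩
      linarith [step1 P2]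
    linarith
  -- (D) Lac ≤ Lab + Lbc
  have hD : lowerIntD T a c f g ≤ lowerIntD T a b f g + lowerIntD T b c f g := by
    apply csSup_le hneL_ac
    rintro x ⟨Q, rfl⟩
    obtain ⟨P1, P2, _, h2⟩ := RSAux.split_sums hb hab hbc hf hg Q
    have e1 : lowerSumD T f g P1 ≤ lowerIntD T a b f g :=
      le_csSup hbdL_ab (Set.mem_range_self _)
    have e2 : lowerSumD T f g P2 ≤ lowerIntD T b c f g :=
      le_csSup hbdL_bc (Set.mem_range_self _)
    linarith
  unfold RSDeltaIntegrable at h₁ h₂ ⊢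
  unfold RSDeltaIntegral
  constructor <;> linarith
end
end

section
/- (Substitution) Let 𝕋̃ be a time scale and φ : 𝕋̃ → ℝ strictly increasing and continuous with 𝕋 = φ(𝕋̃) a time scale, mapping [A,B]∩𝕋̃ onto [a,b]∩𝕋. If g is increasing on [a,b]∩𝕋 and f is Riemann–Stieltjes delta integrable with respect to g on [a,b]∩𝕋, then f∘φ is Riemann–Stieltjes delta integrable with respect to g∘φ on [A,B]∩𝕋̃ and ∫ₐᵇ f(t) Δg(t) = ∫_A^B f(φ(s)) Δ g(φ(s)). -/
open Set Filter

noncomputable section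

section SubstAux

variable {T T' : Set ℝ} {φ : ℝ → ℝ}

lemma aux_image_Icc (hφmono : StrictMonoOn φ T') (hφim : T = φ '' T')
    {c d : ℝ} (hc : c ∈ T') (hd : d ∈ T') :
    φ '' (Set.Icc c d ∩ T') = Set.Icc (φ c) (φ d) ∩ T := by
  ext u
  constructor
  · rintro ⟨x, ⟨⟨hcx, hxd⟩, hxT⟩, rfl⟩
    exact ⟨⟨hφmono.monotoneOn hc hxT hcx, hφmono.monotoneOn hxT hd hxd⟩,
      hφim ▸ ⟨x, hxT, rfl⟩⟩
  · rintro ⟨⟨h1, h2⟩, hu⟩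
    rw [hφim] at hu
    obtain ⟨x, hxT, rfl⟩ := hu
    exact ⟨x, ⟨⟨(hφmono.le_iff_le hc hxT).mp h1, (hφmono.le_iff_le hxT hd).mp h2⟩,
      hxT⟩, rfl⟩

lemma aux_rho_mem (hT' : IsClosed T') {t s0 : ℝ} (hs0 : s0 ∈ T') (hlt : s0 < t) :
    tsRho T' t ∈ T' := by
  have hSne : {s ∈ T' | s < t}.Nonempty := ⟨s0, hs0, hlt⟩
  have hSbdd : BddAbove {s ∈ T' | s < t} := ⟨t, fun x hx => hx.2.le⟩
  have h := csSup_mem_closure hSne hSbdd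
  have hsub : closure {s ∈ T' | s < t} ⊆ T' :=
    (closure_mono (fun x hx => hx.1)).trans hT'.closure_eq.subset
  exact hsub h

lemma aux_rho (hT : IsClosed T) (hT' : IsClosed T') (hφmono : StrictMonoOn φ T')
    (hφim : T = φ '' T') {t s0 : ℝ} (ht : t ∈ T') (hs0 : s0 ∈ T') (hlt : s0 < t) :
    tsRho T (φ t) = φ (tsRho T' t) := by
  set S : Set ℝ := {s ∈ T' | s < t} with hS
  have hSne : S.Nonempty := ⟨s0, hs0, hlt⟩
  have hSbdd : BddAbove S := ⟨t, fun x hx => hx.2.le⟩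
  have hsupS : sSup S ∈ T' := aux_rho_mem hT' hs0 hlt
  have hset : {u ∈ T | u < φ t} = φ '' S := by
    ext u
    constructor
    · rintro ⟨huT, hu⟩
      rw [hφim] at huT
      obtain ⟨x, hxT, rfl⟩ := huT
      exact ⟨x, ⟨hxT, (hφmono.lt_iff_lt hxT ht).mp hu⟩, rfl⟩
    · rintro ⟨x, ⟨hxT, hx⟩, rfl⟩
      exact ⟨hφim ▸ ⟨x, hxT, rfl⟩, hφmono hxT ht hx⟩
  rw [tsRho, tsRho, hset]
  apply le_antisymm
  · apply csSup_le (hSne.image φ)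
    rintro u ⟨x, hx, rfl⟩
    exact hφmono.monotoneOn hx.1 hsupS (le_csSup hSbdd hx)
  · have hne : (φ '' S).Nonempty := hSne.image φ
    have hbdd : BddAbove (φ '' S) := by
      refine ⟨φ t, ?_⟩
      rintro u ⟨x, hx, rfl⟩
      exact hφmono.monotoneOn hx.1 ht hx.2.le
    have hmem : sSup (φ '' S) ∈ T := by
      have h := csSup_mem_closure hne hbdd
      have hsub : closure (φ '' S) ⊆ T := by
        refine (closure_mono ?_).trans hT.closure_eq.subset
        rintro u ⟨x, hx, rfl⟩
        exact hφim ▸ ⟨x, hx.1, rfl⟩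
      exact hsub h
    rw [hφim] at hmem
    obtain ⟨y, hyT, hy⟩ := hmem
    have hub : ∀ x ∈ S, x ≤ y := by
      intro x hx
      have hxy : φ x ≤ φ y := hy ▸ le_csSup hbdd ⟨x, hx, rfl⟩
      exact (hφmono.le_iff_le hx.1 hyT).mp hxy
    calc φ (sSup S) ≤ φ y := hφmono.monotoneOn hsupS hyT (csSup_le hSne hub)
      _ = sSup (φ '' S) := hy

lemma aux_sum (hT : IsClosed T) (hT' : IsClosed T') (hφmono : StrictMonoOn φ T')
    (hφim : T = φ '' T') (f g : ℝ → ℝ) {A B a b : ℝ}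
    (P : TSPartition T' A B) (Q : TSPartition T a b)
    (hn : Q.n = P.n) (ht : ∀ j ≤ P.n, Q.t j = φ (P.t j)) :
    upperSumD T f g Q = upperSumD T' (f ∘ φ) (g ∘ φ) P ∧
    lowerSumD T f g Q = lowerSumD T' (f ∘ φ) (g ∘ φ) P := by
  have key : ∀ j < P.n,
      f '' (Set.Icc (Q.t j) (tsRho T (Q.t (j + 1))) ∩ T)
        = (f ∘ φ) '' (Set.Icc (P.t j) (tsRho T' (P.t (j + 1))) ∩ T') ∧
      g (Q.t (j + 1)) - g (Q.t j) = (g ∘ φ) (P.t (j + 1)) - (g ∘ φ) (P.t j) := by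
    intro j hj
    have hj1 : j + 1 ≤ P.n := hj
    have hmemj : P.t j ∈ T' := P.mem j (le_of_lt hj)
    have hmemj1 : P.t (j + 1) ∈ T' := P.mem (j + 1) hj1
    have hrho : tsRho T (φ (P.t (j + 1))) = φ (tsRho T' (P.t (j + 1))) :=
      aux_rho hT hT' hφmono hφim hmemj1 hmemj (P.mono j hj)
    have hrmem : tsRho T' (P.t (j + 1)) ∈ T' := aux_rho_mem hT' hmemj (P.mono j hj)
    refine ⟨?_, ?_⟩
    · rw [ht j (le_of_lt hj), ht (j + 1) hj1, hrho,
        ← aux_image_Icc hφmono hφim hmemj hrmem, Set.image_image]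
      rfl
    · rw [ht j (le_of_lt hj), ht (j + 1) hj1]
      rfl
  constructor
  · unfold upperSumD
    rw [hn]
    refine Finset.sum_congr rfl fun j hj => ?_
    rw [Finset.mem_range] at hj
    rw [(key j hj).1, (key j hj).2]
  · unfold lowerSumD
    rw [hn]
    refine Finset.sum_congr rfl fun j hj => ?_
    rw [Finset.mem_range] at hj
    rw [(key j hj).1, (key j hj).2]

end SubstAux

/-- Integration by substitution. -/
theorem statement18 (T T' : Set ℝ) (hT : IsClosed T) (hT' : IsClosed T')
    (hT'ne : T'.Nonempty) (φ : ℝ → ℝ)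
    (hφmono : StrictMonoOn φ T') (hφcont : ContinuousOn φ T')
    (hφim : T = φ '' T')
    (A B a b : ℝ) (hA : A ∈ T') (hB : B ∈ T') (hAB : A < B)
    (hφA : φ A = a) (hφB : φ B = b)
    (honto : φ '' (Set.Icc A B ∩ T') = Set.Icc a b ∩ T)
    (f g : ℝ → ℝ) (hg : MonotoneOn g (Set.Icc a b ∩ T))
    (hint : RSDeltaIntegrable T a b f g) :
    RSDeltaIntegrable T' A B (f ∘ φ) (g ∘ φ) ∧
    RSDeltaIntegral T a b f g = RSDeltaIntegral T' A B (f ∘ φ) (g ∘ φ) := by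
  subst hφA hφB
  -- forward map of partitions
  have hPQ : ∀ P : TSPartition T' A B, ∃ Q : TSPartition T (φ A) (φ B),
      Q.n = P.n ∧ ∀ j ≤ P.n, Q.t j = φ (P.t j) := by
    intro P
    refine ⟨⟨P.n, fun j => φ (P.t j), P.npos, ?_, by show φ (P.t 0) = φ A; rw [P.first],
      by show φ (P.t P.n) = φ B; rw [P.last], ?_⟩,
      rfl, fun j _ => rfl⟩
    · intro j hj
      exact hφim ▸ ⟨P.t j, P.mem j hj, rfl⟩
    · intro j hj
      exact hφmono (P.mem j hj.le) (P.mem (j + 1) hj) (P.mono j hj)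
  -- backward map of partitions
  have hQP : ∀ Q : TSPartition T (φ A) (φ B), ∃ P : TSPartition T' A B,
      Q.n = P.n ∧ ∀ j ≤ P.n, Q.t j = φ (P.t j) := by
    intro Q
    have hex : ∀ j, j ≤ Q.n → ∃ x, x ∈ T' ∧ φ x = Q.t j := by
      intro j hj
      have h : Q.t j ∈ φ '' T' := by rw [← hφim]; exact Q.mem j hj
      obtain ⟨x, hx, hφx⟩ := h
      exact ⟨x, hx, hφx⟩
    choose! s hs1 hs2 using hex
    have hfirst : s 0 = A := by
      apply hφmono.injOn (hs1 0 (Nat.zero_le _)) hA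
      rw [hs2 0 (Nat.zero_le _), Q.first]
    have hlast : s Q.n = B := by
      apply hφmono.injOn (hs1 Q.n le_rfl) hB
      rw [hs2 Q.n le_rfl, Q.last]
    have hmono : ∀ j < Q.n, s j < s (j + 1) := by
      intro j hj
      have h : φ (s j) < φ (s (j + 1)) := by
        rw [hs2 j hj.le, hs2 (j + 1) hj]
        exact Q.mono j hj
      exact (hφmono.lt_iff_lt (hs1 j hj.le) (hs1 (j + 1) hj)).mp h
    exact ⟨⟨Q.n, s, Q.npos, hs1, hfirst, hlast, hmono⟩, rfl,
      fun j hj => (hs2 j hj).symm⟩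
  -- equality of ranges of sums
  have hU : upperIntD T (φ A) (φ B) f g = upperIntD T' A B (f ∘ φ) (g ∘ φ) := by
    unfold upperIntD
    congr 1
    ext x
    simp only [Set.mem_range]
    constructor
    · rintro ⟨Q, rfl⟩
      obtain ⟨P, hn, ht'⟩ := hQP Q
      exact ⟨P, ((aux_sum hT hT' hφmono hφim f g P Q hn ht').1).symm⟩
    · rintro ⟨P, rfl⟩
      obtain ⟨Q, hn, ht'⟩ := hPQ P
      exact ⟨Q, (aux_sum hT hT' hφmono hφim f g P Q hn ht').1⟩
  have hL : lowerIntD T (φ A) (φ B) f g = lowerIntD T' A B (f ∘ φ) (g ∘ φ) := by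
    unfold lowerIntD
    congr 1
    ext x
    simp only [Set.mem_range]
    constructor
    · rintro ⟨Q, rfl⟩
      obtain ⟨P, hn, ht'⟩ := hQP Q
      exact ⟨P, ((aux_sum hT hT' hφmono hφim f g P Q hn ht').2).symm⟩
    · rintro ⟨P, rfl⟩
      obtain ⟨Q, hn, ht'⟩ := hPQ P
      exact ⟨Q, (aux_sum hT hT' hφmono hφim f g P Q hn ht').2⟩
  unfold RSDeltaIntegrable RSDeltaIntegral at *
  exact ⟨by rw [← hU, ← hL, hint], hU⟩
end
end

section
/- (Nabla mean value theorem) Let f be continuous on [a,b] ∩ 𝕋 and nabla differentiable at every point of (a,b] ∩ 𝕋. Then there exist ξ, τ ∈ (a,b] ∩ 𝕋 such that f^∇(ξ) ≤ (f(b) − f(a))/(b − a) ≤ f^∇(τ). -/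
open Set Filter

noncomputable section

/-- `f` has nabla derivative `d` at `t` relative to the time scale `T`. -/
def HasNablaDerivAt (T : Set ℝ) (f : ℝ → ℝ) (d t : ℝ) : Prop :=
  ∀ ε > (0 : ℝ), ∃ U ∈ nhds t, ∀ s ∈ U ∩ T,
    |f (tsRho T t) - f s - d * (tsRho T t - s)| ≤ ε * |tsRho T t - s|

lemma rho_facts {T : Set ℝ} (hT : IsClosed T) {a c : ℝ} (ha : a ∈ T) (hac : a < c) :
    tsRho T c ∈ T ∧ a ≤ tsRho T c ∧ tsRho T c ≤ c := by
  have hne : ({s ∈ T | s < c}).Nonempty := ⟨a, ha, hac⟩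
  have hbdd : BddAbove {s ∈ T | s < c} := ⟨c, fun x hx => le_of_lt hx.2⟩
  refine ⟨?_, le_csSup hbdd ⟨ha, hac⟩, csSup_le hne fun x hx => le_of_lt hx.2⟩
  have hcl := csSup_mem_closure hne hbdd
  have hsub : closure {s ∈ T | s < c} ⊆ T :=
    closure_minimal (fun x hx => hx.1) hT
  exact hsub hcl

lemma key_max (T : Set ℝ) (hT : IsClosed T) (a b : ℝ) (ha : a ∈ T)
    (f : ℝ → ℝ) (r : ℝ) (c : ℝ) (hc : c ∈ Set.Ioc a b ∩ T)
    (hmax : ∀ x ∈ Set.Icc a b ∩ T, f x - r * x ≤ f c - r * c)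
    (d : ℝ) (hd : HasNablaDerivAt T f d c) : r ≤ d := by
  obtain ⟨⟨hac, hcb⟩, hcT⟩ := hc
  obtain ⟨hρT, haρ, hρc⟩ := rho_facts hT ha hac
  set ρ := tsRho T c with hρ
  rcases eq_or_lt_of_le hρc with heq | hlt
  · -- left-dense case
    by_contra hrd
    push_neg at hrd
    set ε := (r - d) / 2 with hε
    have hεpos : 0 < ε := by simp [hε]; linarith
    obtain ⟨U, hU, hUs⟩ := hd ε hεpos
    obtain ⟨δ, hδpos, hball⟩ := Metric.mem_nhds_iff.mp hU
    have hteq : tsRho T c = c := by rw [← hρ, heq]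
    have hlt2 : max (c - δ) a < sSup {s ∈ T | s < c} := by
      rw [show sSup {s ∈ T | s < c} = tsRho T c from rfl, hteq]
      exact max_lt (by linarith) hac
    obtain ⟨s, hsS, hslt⟩ := exists_lt_of_lt_csSup (⟨a, ha, hac⟩ : ({s ∈ T | s < c}).Nonempty) hlt2
    obtain ⟨hsT, hsc⟩ := hsS
    have hsU : s ∈ U := by
      apply hball
      simp only [Metric.mem_ball, Real.dist_eq, abs_sub_lt_iff]
      constructor <;> [linarith [le_max_left (c - δ) a]; linarith [le_max_left (c - δ) a]]
    have habs := hUs s ⟨hsU, hsT⟩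
    rw [← hρ, heq] at habs
    have h1 : f c - f s - d * (c - s) ≤ ε * |c - s| := le_trans (le_abs_self _) habs
    rw [abs_of_pos (by linarith : (0:ℝ) < c - s)] at h1
    have hsmem : s ∈ Set.Icc a b ∩ T :=
      ⟨⟨le_of_lt (lt_of_le_of_lt (le_max_right (c - δ) a) hslt), le_of_lt (lt_of_lt_of_le hsc hcb)⟩, hsT⟩
    have h2 := hmax s hsmem
    nlinarith
  · -- left-scattered case
    have hzero : f ρ - f c - d * (ρ - c) = 0 := by
      by_contra hne0
      have hpos : 0 < |f ρ - f c - d * (ρ - c)| := abs_pos.mpr hne0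
      set ε := |f ρ - f c - d * (ρ - c)| / (2 * (c - ρ)) with hεdef
      have hεpos : 0 < ε := div_pos hpos (by linarith)
      obtain ⟨U, hU, hUs⟩ := hd ε hεpos
      have habs := hUs c ⟨mem_of_mem_nhds hU, hcT⟩
      rw [← hρ] at habs
      rw [abs_of_neg (by linarith : ρ - c < 0)] at habs
      have hεhalf : ε * (c - ρ) = |f ρ - f c - d * (ρ - c)| / 2 := by
        have hne2 : (c - ρ) ≠ 0 := by linarith
        rw [hεdef]; field_simp [hne2]
      linarith
    have hρmem : ρ ∈ Set.Icc a b ∩ T := ⟨⟨haρ, by linarith⟩, hρT⟩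
    have h2 := hmax ρ hρmem
    nlinarith

lemma hasNablaDerivAt_neg {T : Set ℝ} {f : ℝ → ℝ} {d t : ℝ}
    (h : HasNablaDerivAt T f d t) : HasNablaDerivAt T (fun x => -f x) (-d) t := by
  intro ε hε
  obtain ⟨U, hU, hUs⟩ := h ε hε
  refine ⟨U, hU, fun s hs => ?_⟩
  have := hUs s hs
  have heq : -f (tsRho T t) - -f s - -d * (tsRho T t - s)
      = -(f (tsRho T t) - f s - d * (tsRho T t - s)) := by ring
  rw [heq, abs_neg]
  exact this

/-- Nabla mean value theorem. -/
theorem statement19 (T : Set ℝ) (hT : IsClosed T) (a b : ℝ) (ha : a ∈ T) (hb : b ∈ T)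
    (hab : a < b) (f : ℝ → ℝ) (fd : ℝ → ℝ)
    (hfc : ContinuousOn f (Set.Icc a b ∩ T))
    (hfd : ∀ t ∈ Set.Ioc a b ∩ T, HasNablaDerivAt T f (fd t) t) :
    ∃ ξ ∈ Set.Ioc a b ∩ T, ∃ τ ∈ Set.Ioc a b ∩ T,
      fd ξ ≤ (f b - f a) / (b - a) ∧ (f b - f a) / (b - a) ≤ fd τ := by
  set r := (f b - f a) / (b - a) with hr
  have hba : b - a ≠ 0 := by linarith
  have hgab : f a - r * a = f b - r * b := by
    rw [hr]; field_simp; ring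
  have hcomp : IsCompact (Set.Icc a b ∩ T) := isCompact_Icc.inter_right hT
  have hne : (Set.Icc a b ∩ T).Nonempty := ⟨a, ⟨le_refl a, le_of_lt hab⟩, ha⟩
  have hgc : ContinuousOn (fun x => f x - r * x) (Set.Icc a b ∩ T) :=
    hfc.sub ((continuousOn_const).mul continuousOn_id)
  obtain ⟨c0, hc0mem, hc0⟩ := hcomp.exists_isMaxOn hne hgc
  obtain ⟨c1, hc1mem, hc1⟩ := hcomp.exists_isMinOn hne hgc
  -- get a max point in Ioc a b ∩ T
  have hτ : ∃ τ ∈ Set.Ioc a b ∩ T, ∀ x ∈ Set.Icc a b ∩ T, f x - r * x ≤ f τ - r * τ := by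
    rcases eq_or_lt_of_le hc0mem.1.1 with heq | hlt
    · exact ⟨b, ⟨⟨hab, le_refl b⟩, hb⟩, fun x hx => by
        have := hc0 hx; rw [← heq] at this; simpa [← hgab] using this⟩
    · exact ⟨c0, ⟨⟨hlt, hc0mem.1.2⟩, hc0mem.2⟩, fun x hx => hc0 hx⟩
  have hξ : ∃ ξ ∈ Set.Ioc a b ∩ T, ∀ x ∈ Set.Icc a b ∩ T, f ξ - r * ξ ≤ f x - r * x := by
    rcases eq_or_lt_of_le hc1mem.1.1 with heq | hlt
    · exact ⟨b, ⟨⟨hab, le_refl b⟩, hb⟩, fun x hx => by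
        have := hc1 hx; rw [← heq] at this; simpa [← hgab] using this⟩
    · exact ⟨c1, ⟨⟨hlt, hc1mem.1.2⟩, hc1mem.2⟩, fun x hx => hc1 hx⟩
  obtain ⟨τ, hτmem, hτmax⟩ := hτ
  obtain ⟨ξ, hξmem, hξmin⟩ := hξ
  refine ⟨ξ, hξmem, τ, hτmem, ?_, ?_⟩
  · have := key_max T hT a b ha (fun x => -f x) (-r) ξ hξmem
      (fun x hx => by have := hξmin x hx; linarith)
      (-(fd ξ)) (hasNablaDerivAt_neg (hfd ξ hξmem))
    linarith
  · exact key_max T hT a b ha f r τ hτmem hτmax (fd τ) (hfd τ hτmem)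
end
end
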